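/- arXiv:1310.4764 — 3 statements merged into one kernel-verified Lean document; each statement's English description precedes it below -/
import Mathlib

section
/- Let x, y ∈ G_0 = L_0·Z^d be nearest neighbors in G_0 (i.e. |x−y|₁ = L_0) and suppose the configuration ω is such that both x and y are 0-good (i.e. both A^u_x ∩ B^u_x and A^u_y ∩ B^u_y occur). Then: (a) for each z ∈ {x,y}, the graph S_{L_0} ∩ (z+[0,L_0)^d) contains a unique connected component C_z with at least (3/4)η(u)L_0^d vertices; (b) C_x and C_y are connected in the graph S ∩ ((x+[0,2L_0)^d) ∪ (y+[0,2L_0)^d)). -/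
open MeasureTheory Filter
open scoped ENNReal

namespace Perco

/-- A point of the lattice `ℤ^d`. -/
abbrev Pt (d : ℕ) := Fin d → ℤ

/-- A percolation configuration on `ℤ^d`. -/
abbrev Config (d : ℕ) := Pt d → Bool

variable {d : ℕ}

/-- The `ℓ¹`-distance on `ℤ^d`. -/
def dist1 (x y : Pt d) : ℕ := ∑ i, (x i - y i).natAbs

/-- The `ℓ^∞`-distance on `ℤ^d`. -/
def distInf (x y : Pt d) : ℕ := Finset.univ.sup fun i => (x i - y i).natAbs

/-- The closed `ℓ^∞`-ball of radius `R` around `x`. -/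
def ballZ (x : Pt d) (R : ℕ) : Set (Pt d) := {y | distInf x y ≤ R}

/-- Nearest-neighbour adjacency in `ℤ^d`. -/
def adj (x y : Pt d) : Prop := dist1 x y = 1

/-- The occupied set of a configuration. -/
def SS (ω : Config d) : Set (Pt d) := {x | ω x = true}

/-- One step of a nearest-neighbour path staying inside `T`. -/
def stepRel (T : Set (Pt d)) (x y : Pt d) : Prop := adj x y ∧ x ∈ T ∧ y ∈ T

/-- `x` and `y` are connected by a nearest-neighbour path inside `T`. -/
def connIn (T : Set (Pt d)) (x y : Pt d) : Prop :=
  x ∈ T ∧ y ∈ T ∧ Relation.ReflTransGen (stepRel T) x y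

/-- The connected component (cluster) of `x` in `T`. -/
def cluster (T : Set (Pt d)) (x : Pt d) : Set (Pt d) := {y | connIn T x y}

/-- `S_r`: vertices of `S(ω)` in connected components of `ℓ¹`-diameter at least `r`. -/
def Sr (ω : Config d) (r : ℝ) : Set (Pt d) :=
  {x | x ∈ SS ω ∧ ∃ y ∈ cluster (SS ω) x, ∃ z ∈ cluster (SS ω) x, r ≤ (dist1 y z : ℝ)}

/-- `S_∞`: vertices of `S(ω)` in infinite connected components. -/
def Sinf (ω : Config d) : Set (Pt d) := {x | x ∈ SS ω ∧ (cluster (SS ω) x).Infinite}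

/-- The shift of a configuration by `x`. -/
def shift (x : Pt d) (ω : Config d) : Config d := fun y => ω (x + y)

/-- An increasing event. -/
def IncreasingEvent (G : Set (Config d)) : Prop :=
  ∀ ω ω' : Config d, (∀ x, ω x = true → ω' x = true) → ω ∈ G → ω' ∈ G

/-- A decreasing event. -/
def DecreasingEvent (G : Set (Config d)) : Prop :=
  ∀ ω ω' : Config d, (∀ x, ω' x = true → ω x = true) → ω ∈ G → ω' ∈ G

/-- The event `G` depends only on the coordinates in `B`. -/
def DependsOn (G : Set (Config d)) (B : Set (Pt d)) : Prop :=
  ∀ ω ω' : Config d, (∀ x ∈ B, ω x = ω' x) → (ω ∈ G ↔ ω' ∈ G)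

/-- The edge boundary of `A` in `Sset`: (directed representatives of) edges of `ℤ^d`
with one endpoint in `A` and the other in `Sset \ A`. -/
def edgeBd (Sset A : Set (Pt d)) : Set (Pt d × Pt d) :=
  {p | adj p.1 p.2 ∧ p.1 ∈ A ∧ p.2 ∈ Sset \ A}

/-- The density `η(u) = P[0 ∈ S_∞]` of the infinite cluster. -/
noncomputable def eta (d : ℕ) (P : Measure (Config d)) : ℝ :=
  (P {ω | (0 : Pt d) ∈ Sinf ω}).toReal

/-- The first local-uniqueness event of axiom S1. -/
def locUniq1 (d : ℕ) (R : ℕ) : Set (Config d) :=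
  {ω | (Sr ω R ∩ ballZ (0 : Pt d) R).Nonempty}

/-- The second local-uniqueness event of axiom S1. -/
def locUniq2 (d : ℕ) (R : ℕ) : Set (Config d) :=
  {ω | ∀ x ∈ Sr ω ((R : ℝ)/10) ∩ ballZ (0 : Pt d) R,
       ∀ y ∈ Sr ω ((R : ℝ)/10) ∩ ballZ (0 : Pt d) R,
       connIn (SS ω ∩ ballZ (0 : Pt d) (2*R)) x y}


/-! ### Renormalization scales and good/bad boxes -/

/-- The scales `l_k = l_0·4^{k^{θ_sc}}`. -/
def lSc (l0 θsc k : ℕ) : ℕ := l0 * 4 ^ (k ^ θsc)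

/-- The scales `r_k = r_0·2^{k^{θ_sc}}`. -/
def rSc (r0 θsc k : ℕ) : ℕ := r0 * 2 ^ (k ^ θsc)

/-- The scales `L_0 = L_0`, `L_{k+1} = l_k·L_k`. -/
def LSc (l0 L0 θsc : ℕ) : ℕ → ℕ
  | 0 => L0
  | k+1 => lSc l0 θsc k * LSc l0 L0 θsc k

/-- The renormalized lattice `G = L·ℤ^d`. -/
def lattice (d L : ℕ) : Set (Pt d) := {x | ∀ i, (L : ℤ) ∣ x i}

/-- The box `x + [0,n)^d`. -/
def box (x : Pt d) (n : ℕ) : Set (Pt d) := {y | ∀ i, x i ≤ y i ∧ y i < x i + n}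

/-- The box `x + [lo,hi)^d`. -/
def boxI (x : Pt d) (lo hi : ℤ) : Set (Pt d) := {y | ∀ i, x i + lo ≤ y i ∧ y i < x i + hi}

/-- The corner `x + e·L_0` of the sub-box indexed by `e ∈ {0,1}^d`. -/
def subCorner (x : Pt d) (L0 : ℕ) (e : Fin d → Bool) : Pt d :=
  fun i => x i + (if e i then (L0 : ℤ) else 0)

/-- `C` is a connected component of `S_{L0} ∩ B` of cardinality at least `(3/4)·η·L_0^d`. -/
def bigCompIn (ω : Config d) (η : ℝ) (L0 : ℕ) (B : Set (Pt d)) (C : Set (Pt d)) : Prop :=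
  (∃ w ∈ Sr ω (L0 : ℝ) ∩ B, C = cluster (Sr ω (L0 : ℝ) ∩ B) w) ∧
  (3/4 : ℝ) * η * (L0 : ℝ) ^ d ≤ C.ncard

/-- The event `A^u_x`: each of the `2^d` sub-boxes of side `L_0` of `x + [0,2L_0)^d` contains a
connected component of `S_{L_0}` with at least `(3/4)·η·L_0^d` vertices, and all these components
are connected in `S ∩ (x+[0,2L_0)^d)`. -/
def eventA (d : ℕ) (η : ℝ) (L0 : ℕ) (x : Pt d) : Set (Config d) :=
  {ω | (∀ e : Fin d → Bool, ∃ C, bigCompIn ω η L0 (box (subCorner x L0 e) L0) C) ∧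
       (∀ e e' : Fin d → Bool, ∀ C C' : Set (Pt d), ∀ y z : Pt d,
          bigCompIn ω η L0 (box (subCorner x L0 e) L0) C →
          bigCompIn ω η L0 (box (subCorner x L0 e') L0) C' →
          y ∈ C → z ∈ C' → connIn (SS ω ∩ box x (2*L0)) y z)}

/-- The event `B^u_x`: each of the `2^d` sub-boxes of side `L_0` of `x + [0,2L_0)^d` contains at
most `(5/4)·η·L_0^d` vertices of `S_{L_0}`. -/
def eventB (d : ℕ) (η : ℝ) (L0 : ℕ) (x : Pt d) : Set (Config d) :=
  {ω | ∀ e : Fin d → Bool,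
    ((Sr ω (L0 : ℝ) ∩ box (subCorner x L0 e) L0).ncard : ℝ) ≤ (5/4 : ℝ) * η * (L0 : ℝ) ^ d}

/-- The recursive cascading of a family of "bad" seed events along the renormalization scheme. -/
def cascade (d : ℕ) (r0 l0 L0 θsc : ℕ) (seed : Pt d → Set (Config d)) :
    ℕ → Pt d → Set (Config d)
  | 0, x => seed x
  | k+1, x => {ω | ∃ x₁ x₂ : Pt d,
      x₁ ∈ lattice d (LSc l0 L0 θsc k) ∩ box x (LSc l0 L0 θsc (k+1)) ∧
      x₂ ∈ lattice d (LSc l0 L0 θsc k) ∩ box x (LSc l0 L0 θsc (k+1)) ∧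
      rSc r0 θsc k * LSc l0 L0 θsc k ≤ distInf x₁ x₂ ∧
      ω ∈ cascade d r0 l0 L0 θsc seed k x₁ ∧ ω ∈ cascade d r0 l0 L0 θsc seed k x₂}

/-- The event `Ā^u_{x,k}`. -/
def Abar (d : ℕ) (η : ℝ) (r0 l0 L0 θsc : ℕ) : ℕ → Pt d → Set (Config d) :=
  cascade d r0 l0 L0 θsc (fun x => (eventA d η L0 x)ᶜ)

/-- The event `B̄^u_{x,k}`. -/
def Bbar (d : ℕ) (η : ℝ) (r0 l0 L0 θsc : ℕ) : ℕ → Pt d → Set (Config d) :=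
  cascade d r0 l0 L0 θsc (fun x => (eventB d η L0 x)ᶜ)

/-- The event that `x ∈ G_k` is `k`-bad. -/
def kBad (d : ℕ) (η : ℝ) (r0 l0 L0 θsc k : ℕ) (x : Pt d) : Set (Config d) :=
  Abar d η r0 l0 L0 θsc k x ∪ Bbar d η r0 l0 L0 θsc k x

lemma subCorner_false (x : Pt d) (L0 : ℕ) : subCorner x L0 (fun _ => false) = x := by
  funext i; simp [subCorner]

lemma dist1_comm (a b : Pt d) : dist1 a b = dist1 b a := by
  unfold dist1
  refine Finset.sum_congr rfl fun i _ => ?_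
  rw [← Int.natAbs_neg, neg_sub]

lemma stepRel_symm (T : Set (Pt d)) : Symmetric (stepRel T) := by
  intro a b h
  exact ⟨by unfold adj at *; rw [dist1_comm]; exact h.1, h.2.2, h.2.1⟩

lemma connIn_symm {T : Set (Pt d)} {a b : Pt d} (h : connIn T a b) : connIn T b a :=
  ⟨h.2.1, h.1, (@Relation.ReflTransGen.stdSymm _ _ ⟨fun _ _ hab => stepRel_symm T hab⟩).symm _ _ h.2.2⟩

lemma connIn_trans {T : Set (Pt d)} {a b c : Pt d} (h1 : connIn T a b) (h2 : connIn T b c) :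
    connIn T a c :=
  ⟨h1.1, h2.2.1, h1.2.2.trans h2.2.2⟩

lemma connIn_mono {T T' : Set (Pt d)} (h : T ⊆ T') {a b : Pt d} (hc : connIn T a b) :
    connIn T' a b :=
  ⟨h hc.1, h hc.2.1, Relation.ReflTransGen.mono (show ∀ u v, stepRel T u v → stepRel T' u v from fun u v huv => ⟨huv.1, h huv.2.1, h huv.2.2⟩) a b hc.2.2⟩

lemma cluster_eq_of_mem {T : Set (Pt d)} {w w' z : Pt d}
    (hz : z ∈ cluster T w) (hz' : z ∈ cluster T w') :
    cluster T w = cluster T w' := by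
  ext v
  constructor
  · intro hv
    exact connIn_trans hz' (connIn_trans (connIn_symm hz) hv)
  · intro hv
    exact connIn_trans hz (connIn_trans (connIn_symm hz') hv)

lemma cluster_subset {T : Set (Pt d)} (w : Pt d) : cluster T w ⊆ T :=
  fun _ ha => ha.2.1

lemma box_finite (z : Pt d) (n : ℕ) : (box z n).Finite := by
  have hsub : box z n ⊆ Set.pi Set.univ (fun i => Set.Ico (z i) (z i + n)) := by
    intro a ha i _; exact ⟨(ha i).1, (ha i).2⟩
  exact (Set.Finite.pi fun i => Set.finite_Ico _ _).subset hsub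

lemma bigComp_unique (ω : Config d) {η : ℝ} (hη : 0 < η) {L0 : ℕ} (hL0 : 0 < L0)
    (z : Pt d)
    (hB : ((Sr ω (L0 : ℝ) ∩ box z L0).ncard : ℝ) ≤ (5/4 : ℝ) * η * (L0 : ℝ) ^ d)
    {C C' : Set (Pt d)} (hC : bigCompIn ω η L0 (box z L0) C)
    (hC' : bigCompIn ω η L0 (box z L0) C') : C = C' := by
  by_contra hne
  obtain ⟨⟨w, hw, rfl⟩, hcard⟩ := hC
  obtain ⟨⟨w', hw', rfl⟩, hcard'⟩ := hC'
  set T := Sr ω (L0 : ℝ) ∩ box z L0 with hT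
  have hdisj : Disjoint (cluster T w) (cluster T w') := by
    rw [Set.disjoint_left]
    intro a ha ha'
    exact hne (cluster_eq_of_mem ha ha')
  have hTfin : T.Finite := (box_finite z L0).subset Set.inter_subset_right
  have hfin : (cluster T w).Finite := hTfin.subset (cluster_subset w)
  have hfin' : (cluster T w').Finite := hTfin.subset (cluster_subset w')
  have hunion : (cluster T w ∪ cluster T w').ncard = (cluster T w).ncard + (cluster T w').ncard :=
    Set.ncard_union_eq hdisj hfin hfin'
  have hle : (cluster T w ∪ cluster T w').ncard ≤ T.ncard :=
    Set.ncard_le_ncard (Set.union_subset (cluster_subset w) (cluster_subset w')) hTfin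
  have hkey : ((cluster T w).ncard : ℝ) + ((cluster T w').ncard : ℝ) ≤ (T.ncard : ℝ) := by
    rw [hunion] at hle
    exact_mod_cast hle
  have hpow : (0 : ℝ) < (L0 : ℝ) ^ d := by positivity
  nlinarith [hcard, hcard', hB, hkey]

/-- Lemma 2.6 / DRS Lemma 5.2. If `x,y` are nearest neighbours of
`G_0 = L_0·ℤ^d` and both are `0`-good, then (a) each of the graphs `S_{L_0} ∩ (z+[0,L_0)^d)`,
`z ∈ {x,y}`, contains a unique connected component `C_z` with at least `(3/4)η·L_0^d` vertices,
and (b) `C_x` and `C_y` are connected in `S ∩ ((x+[0,2L_0)^d) ∪ (y+[0,2L_0)^d))`. -/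
theorem stmt4 (d : ℕ) (hd : 2 ≤ d) (η : ℝ) (hη : 0 < η) (hη1 : η ≤ 1)
    (L0 : ℕ) (hL0 : 0 < L0)
    (x y : Pt d) (hx : x ∈ lattice d L0) (hy : y ∈ lattice d L0)
    (hxy : dist1 x y = L0)
    (ω : Config d)
    (hgoodx : ω ∈ eventA d η L0 x ∩ eventB d η L0 x)
    (hgoody : ω ∈ eventA d η L0 y ∩ eventB d η L0 y) :
    -- (a) uniqueness of the big component in each box
    (∀ z ∈ ({x, y} : Set (Pt d)),
      ∃! C : Set (Pt d), bigCompIn ω η L0 (box z L0) C) ∧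
    -- (b) the big components of the two boxes are connected locally
    (∀ Cx Cy : Set (Pt d),
      bigCompIn ω η L0 (box x L0) Cx → bigCompIn ω η L0 (box y L0) Cy →
      ∀ p ∈ Cx, ∀ q ∈ Cy,
        connIn (SS ω ∩ (box x (2*L0) ∪ box y (2*L0))) p q) := by
  classical
  -- The coordinate analysis: exactly one coordinate differs, by ±L0.
  set a : Fin d → ℕ := fun i => (x i - y i).natAbs with ha
  have hsum : ∑ i, a i = L0 := hxy
  have hdvd : ∀ i, L0 ∣ a i := by
    intro i
    have h1 : (L0 : ℤ) ∣ (x i - y i) := dvd_sub (hx i) (hy i)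
    have := Int.natAbs_dvd_natAbs.mpr h1
    simpa using this
  have hex : ∃ i0, a i0 ≠ 0 := by
    by_contra h
    push_neg at h
    have : ∑ i, a i = 0 := Finset.sum_eq_zero fun i _ => h i
    omega
  obtain ⟨i0, hi0⟩ := hex
  have hle_sum : ∀ i, a i ≤ L0 := by
    intro i
    rw [← hsum]
    exact Finset.single_le_sum (fun j _ => Nat.zero_le _) (Finset.mem_univ i)
  have hi0L : a i0 = L0 :=
    le_antisymm (hle_sum i0) (Nat.le_of_dvd (Nat.pos_of_ne_zero hi0) (hdvd i0))
  have hother : ∀ i, i ≠ i0 → a i = 0 := by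
    intro i hne
    by_contra h
    have h1 : L0 ≤ a i := Nat.le_of_dvd (Nat.pos_of_ne_zero h) (hdvd i)
    have h2 : a i0 + a i ≤ ∑ j, a j := by
      rw [← Finset.sum_pair (Ne.symm hne)]
      exact Finset.sum_le_sum_of_subset (Finset.subset_univ _)
    omega
  have hothereq : ∀ i, i ≠ i0 → x i = y i := by
    intro i hne
    have : (x i - y i).natAbs = 0 := hother i hne
    have : x i - y i = 0 := Int.natAbs_eq_zero.mp this
    linarith
  have hcase : x i0 - y i0 = (L0 : ℤ) ∨ x i0 - y i0 = -(L0 : ℤ) := by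
    have : ((x i0 - y i0).natAbs : ℤ) = (L0 : ℤ) := by exact_mod_cast hi0L
    rcases Int.natAbs_eq (x i0 - y i0) with h | h
    · left; omega
    · right; omega
  -- part (a)
  have hBx : ((Sr ω (L0 : ℝ) ∩ box x L0).ncard : ℝ) ≤ (5/4 : ℝ) * η * (L0 : ℝ) ^ d := by
    have := hgoodx.2 (fun _ => false)
    rwa [subCorner_false] at this
  have hBy : ((Sr ω (L0 : ℝ) ∩ box y L0).ncard : ℝ) ≤ (5/4 : ℝ) * η * (L0 : ℝ) ^ d := by
    have := hgoody.2 (fun _ => false)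
    rwa [subCorner_false] at this
  have hAx : ∃ C, bigCompIn ω η L0 (box x L0) C := by
    have := hgoodx.1.1 (fun _ => false)
    rwa [subCorner_false] at this
  have hAy : ∃ C, bigCompIn ω η L0 (box y L0) C := by
    have := hgoody.1.1 (fun _ => false)
    rwa [subCorner_false] at this
  refine ⟨?_, ?_⟩
  · intro z hz
    rcases hz with hz | hz
    · rw [show z = x from hz]
      obtain ⟨C, hC⟩ := hAx
      exact ⟨C, hC, fun C' hC' => bigComp_unique ω hη hL0 x hBx hC' hC⟩
    · rw [show z = y from hz]
      obtain ⟨C, hC⟩ := hAy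
      exact ⟨C, hC, fun C' hC' => bigComp_unique ω hη hL0 y hBy hC' hC⟩
  -- part (b)
  · intro Cx Cy hCx hCy p hp q hq
    rcases hcase with h | h
    · -- x i0 = y i0 + L0 : x = subCorner y L0 e
      set e : Fin d → Bool := fun i => decide (i = i0) with he
      have hsc : subCorner y L0 e = x := by
        funext i
        by_cases hi : i = i0
        · subst hi
          show y i + (if e i then (L0 : ℤ) else 0) = x i
          rw [if_pos (by simp [he])]
          omega
        · show y i + (if e i then (L0 : ℤ) else 0) = x i
          rw [if_neg (by simp [he, hi])]
          rw [hothereq i hi, add_zero]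
      have hCx' : bigCompIn ω η L0 (box (subCorner y L0 e) L0) Cx := by rw [hsc]; exact hCx
      have hCy' : bigCompIn ω η L0 (box (subCorner y L0 (fun _ => false)) L0) Cy := by
        rw [subCorner_false]; exact hCy
      have := hgoody.1.2 e (fun _ => false) Cx Cy p q hCx' hCy' hp hq
      exact connIn_mono (Set.inter_subset_inter_right _ Set.subset_union_right) this
    · -- y i0 = x i0 + L0 : y = subCorner x L0 e
      set e : Fin d → Bool := fun i => decide (i = i0) with he
      have hsc : subCorner x L0 e = y := by
        funext i
        by_cases hi : i = i0
        · subst hi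
          show x i + (if e i then (L0 : ℤ) else 0) = y i
          rw [if_pos (by simp [he])]
          omega
        · show x i + (if e i then (L0 : ℤ) else 0) = y i
          rw [if_neg (by simp [he, hi])]
          rw [← hothereq i hi, add_zero]
      have hCy' : bigCompIn ω η L0 (box (subCorner x L0 e) L0) Cy := by rw [hsc]; exact hCy
      have hCx' : bigCompIn ω η L0 (box (subCorner x L0 (fun _ => false)) L0) Cx := by
        rw [subCorner_false]; exact hCx
      have := hgoodx.1.2 (fun _ => false) e Cx Cy p q hCx' hCy' hp hq
      exact connIn_mono (Set.inter_subset_inter_right _ Set.subset_union_left) this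

end Perco
end

section
/- Let θ_sc ≥ 1 be an integer, let r_0, l_0, L_0 be positive integers, and define l_k = l_0·4^{k^{θ_sc}}, r_k = r_0·2^{k^{θ_sc}}, L_k = l_{k−1}·L_{k−1} for k ≥ 1. Fix θ_iso ∈ (0,1), let d ≥ 2, assume R ≥ L_0^{3d²/θ_iso}, and set s = max{s' : L_{s'}^{3d²} ≤ R^{θ_iso}} and r = ⌊s/2⌋. Then: (i) L_s ≥ (1/(4l_0))·R^{θ_iso/(3d²(1+2^{θ_sc}))}; (ii) L_r² ≤ L_0·L_s; (iii) there exists c = c(θ_iso, θ_sc, l_0, L_0) > 0 such that s ≥ c·(log R)^{1/(1+θ_sc)} − 1 for all R ≥ L_0^{3d²/θ_iso}. -/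
open MeasureTheory Filter
open scoped ENNReal

namespace Perco

variable {d : ℕ}

/-- `s` is the largest integer with `L_s^{3d²} ≤ R^{θ_iso}`. -/
def isScaleS (d l0 L0 θsc : ℕ) (θiso : ℝ) (R s : ℕ) : Prop :=
  ((LSc l0 L0 θsc s : ℝ)) ^ (3*d^2) ≤ (R : ℝ) ^ θiso ∧
  ∀ s' : ℕ, ((LSc l0 L0 θsc s' : ℝ)) ^ (3*d^2) ≤ (R : ℝ) ^ θiso → s' ≤ s

variable {l0 L0 θsc : ℕ}

lemma one_le_lSc (hl0 : 0 < l0) (k : ℕ) : 1 ≤ lSc l0 θsc k :=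
  Nat.one_le_iff_ne_zero.mpr (by simp [lSc]; omega)

lemma one_le_LSc (hl0 : 0 < l0) (hL0 : 0 < L0) (k : ℕ) : 1 ≤ LSc l0 L0 θsc k := by
  induction k with
  | zero => exact hL0
  | succ k ih => exact Nat.one_le_iff_ne_zero.mpr (Nat.mul_ne_zero
      (Nat.one_le_iff_ne_zero.mp (one_le_lSc hl0 k)) (Nat.one_le_iff_ne_zero.mp ih))

lemma lSc_mono (hab : a ≤ b) : lSc l0 θsc a ≤ lSc l0 θsc b :=
  Nat.mul_le_mul_left _ (Nat.pow_le_pow_right (by norm_num) (Nat.pow_le_pow_left hab _))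

lemma LSc_mono (hl0 : 0 < l0) (hL0 : 0 < L0) {a b : ℕ} (hab : a ≤ b) :
    LSc l0 L0 θsc a ≤ LSc l0 L0 θsc b := by
  induction b with
  | zero => simp_all
  | succ b ih =>
    rcases Nat.lt_or_ge a (b+1) with h | h
    · calc LSc l0 L0 θsc a ≤ LSc l0 L0 θsc b := ih (by omega)
        _ ≤ lSc l0 θsc b * LSc l0 L0 θsc b :=
          Nat.le_mul_of_pos_left _ (one_le_lSc hl0 b)
        _ = LSc l0 L0 θsc (b+1) := rfl
    · have : a = b + 1 := by omega
      subst this; exact le_rfl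

lemma LSc_superadd (hl0 : 0 < l0) (hL0 : 0 < L0) (a b : ℕ) :
    LSc l0 L0 θsc a * LSc l0 L0 θsc b ≤ L0 * LSc l0 L0 θsc (a + b) := by
  induction b with
  | zero => simpa [LSc, Nat.mul_comm] using le_rfl
  | succ b ih =>
    have h1 : lSc l0 θsc b ≤ lSc l0 θsc (a+b) := lSc_mono (by omega)
    calc LSc l0 L0 θsc a * LSc l0 L0 θsc (b+1)
        = lSc l0 θsc b * (LSc l0 L0 θsc a * LSc l0 L0 θsc b) := by
          simp only [LSc]; ring
      _ ≤ lSc l0 θsc (a+b) * (L0 * LSc l0 L0 θsc (a+b)) :=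
          Nat.mul_le_mul h1 ih
      _ = L0 * LSc l0 L0 θsc (a+b+1) := by simp only [LSc]; ring

lemma four_pow_le (hl0 : 0 < l0) (hL0 : 0 < L0) (hθ : 1 ≤ θsc) (k : ℕ) :
    4 ^ (k ^ θsc) ≤ 4 * LSc l0 L0 θsc k ^ (2 ^ θsc) := by
  match k with
  | 0 =>
    have h0 : (0:ℕ) ^ θsc = 0 := Nat.zero_pow (by omega)
    rw [h0, pow_zero]
    have := pow_pos (lt_of_lt_of_le one_pos (one_le_LSc (θsc := θsc) hl0 hL0 0)) (2 ^ θsc)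
    nlinarith
  | 1 =>
    rw [Nat.one_pow]
    exact Nat.le_mul_of_pos_right 4 (pow_pos (lt_of_lt_of_le one_pos (one_le_LSc hl0 hL0 1)) _)
  | (k+2) =>
    have h1 : (k+2) ^ θsc ≤ 2 ^ θsc * (k+1) ^ θsc := by
      rw [← Nat.mul_pow]; exact Nat.pow_le_pow_left (by omega) _
    have h2 : 4 ^ ((k+1) ^ θsc) ≤ LSc l0 L0 θsc (k+2) := by
      have ha : 4 ^ ((k+1) ^ θsc) ≤ lSc l0 θsc (k+1) :=
        Nat.le_mul_of_pos_left _ hl0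
      have hb : lSc l0 θsc (k+1) ≤ lSc l0 θsc (k+1) * LSc l0 L0 θsc (k+1) :=
        Nat.le_mul_of_pos_right _ (lt_of_lt_of_le one_pos (one_le_LSc hl0 hL0 (k+1)))
      exact le_trans ha hb
    calc 4 ^ ((k+2) ^ θsc) ≤ 4 ^ (2 ^ θsc * (k+1) ^ θsc) := Nat.pow_le_pow_right (by norm_num) h1
      _ = (4 ^ ((k+1) ^ θsc)) ^ (2 ^ θsc) := by rw [← Nat.pow_mul, Nat.mul_comm]
      _ ≤ (LSc l0 L0 θsc (k+2)) ^ (2 ^ θsc) := Nat.pow_le_pow_left h2 _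
      _ ≤ 4 * _ := Nat.le_mul_of_pos_left _ (by norm_num)


lemma LSc_succ_le (hl0 : 0 < l0) (hL0 : 0 < L0) (hθ : 1 ≤ θsc) (k : ℕ) :
    LSc l0 L0 θsc (k+1) ≤ 4 * l0 * LSc l0 L0 θsc k ^ (2 ^ θsc + 1) := by
  have h := four_pow_le hl0 hL0 hθ (l0 := l0) (L0 := L0) k
  have he : LSc l0 L0 θsc (k+1) = l0 * 4 ^ (k ^ θsc) * LSc l0 L0 θsc k := rfl
  rw [he, pow_succ]
  calc l0 * 4 ^ (k ^ θsc) * LSc l0 L0 θsc k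
      ≤ l0 * (4 * LSc l0 L0 θsc k ^ (2 ^ θsc)) * LSc l0 L0 θsc k :=
        Nat.mul_le_mul_right _ (Nat.mul_le_mul_left _ h)
    _ = 4 * l0 * (LSc l0 L0 θsc k ^ (2 ^ θsc) * LSc l0 L0 θsc k) := by ring

lemma pow_succ_ge (hθ : 1 ≤ θsc) (k : ℕ) : k ^ θsc + 1 ≤ (k+1) ^ θsc :=
  Nat.pow_lt_pow_left (Nat.lt_succ_self k) (by omega)

lemma LSc_le_aux (hl0 : 0 < l0) (hL0 : 0 < L0) (hθ : 1 ≤ θsc) (k : ℕ) :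
    LSc l0 L0 θsc k ≤ (4 * l0 * L0) ^ (k ^ θsc * k + 1) := by
  induction k with
  | zero => simpa [LSc] using Nat.le_mul_of_pos_left L0 (by positivity)
  | succ k ih =>
    have hM : 4 ≤ 4 * l0 * L0 := by nlinarith
    have h1 : lSc l0 θsc k ≤ (4 * l0 * L0) ^ (k ^ θsc + 1) := by
      rw [pow_succ]
      have : (4:ℕ) ^ (k ^ θsc) ≤ (4 * l0 * L0) ^ (k ^ θsc) := Nat.pow_le_pow_left hM _
      calc lSc l0 θsc k = l0 * 4 ^ (k ^ θsc) := rfl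
        _ ≤ (4 * l0 * L0) * (4 * l0 * L0) ^ (k ^ θsc) :=
            Nat.mul_le_mul (by nlinarith) this
        _ = (4 * l0 * L0) ^ (k ^ θsc) * (4 * l0 * L0) := by ring
    have h2 : LSc l0 L0 θsc (k+1) ≤ (4 * l0 * L0) ^ (k ^ θsc + 1 + (k ^ θsc * k + 1)) := by
      rw [pow_add]
      exact Nat.mul_le_mul h1 ih
    refine h2.trans (Nat.pow_le_pow_right (by positivity) ?_)
    have h3 := pow_succ_ge hθ k
    nlinarith [Nat.zero_le (k ^ θsc)]

lemma LSc_le_pow (hl0 : 0 < l0) (hL0 : 0 < L0) (hθ : 1 ≤ θsc) (k : ℕ) :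
    LSc l0 L0 θsc k ≤ (4 * l0 * L0) ^ ((k+1) ^ (θsc+1)) := by
  refine (LSc_le_aux hl0 hL0 hθ k).trans (Nat.pow_le_pow_right (by positivity) ?_)
  have h3 := pow_succ_ge hθ k
  have : (k+1) ^ (θsc + 1) = (k+1) ^ θsc * (k+1) := by rw [pow_succ]
  nlinarith [Nat.zero_le (k ^ θsc)]


/-- Deterministic facts about the renormalization scales: with
`s = max{s' : L_{s'}^{3d²} ≤ R^{θ_iso}}` and `r = ⌊s/2⌋`, one has
(i) `L_s ≥ (4l_0)⁻¹·R^{θ_iso/(3d²(1+2^{θ_sc}))}`, (ii) `L_r² ≤ L_0·L_s`, and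
(iii) `s ≥ c·(log R)^{1/(1+θ_sc)} − 1` for a constant `c = c(θ_iso,θ_sc,l_0,L_0) > 0`. -/
theorem stmt7 (d θsc r0 l0 L0 : ℕ) (hd : 2 ≤ d) (hθsc : 1 ≤ θsc)
    (hr0 : 0 < r0) (hl0 : 0 < l0) (hL0 : 0 < L0)
    (θiso : ℝ) (hθiso : θiso ∈ Set.Ioo (0:ℝ) 1) :
    ∃ c > (0:ℝ), ∀ R : ℕ, (L0 : ℝ) ^ ((3*(d:ℝ)^2)/θiso) ≤ (R : ℝ) →
      ∀ s : ℕ, isScaleS d l0 L0 θsc θiso R s →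
        ((1/(4*(l0:ℝ))) * (R : ℝ) ^ (θiso/(3*(d:ℝ)^2*(1 + (2:ℝ)^θsc))) ≤ LSc l0 L0 θsc s) ∧
        (LSc l0 L0 θsc (s/2))^2 ≤ L0 * LSc l0 L0 θsc s ∧
        c * (Real.log R) ^ ((1:ℝ)/(1 + (θsc : ℝ))) - 1 ≤ (s : ℝ) := by
  obtain ⟨hθ0, hθ1⟩ := hθiso
  set N : ℕ := 3*d^2 with hNdef
  have hN : 0 < N := by positivity
  set M : ℕ := 4*l0*L0 with hMdef
  have hM4 : (4:ℝ) ≤ (M:ℝ) := by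
    have : 4 ≤ M := by simp only [hMdef]; nlinarith
    exact_mod_cast this
  have hlogM : 0 < Real.log (M:ℝ) := Real.log_pos (by linarith)
  set α : ℝ := (1:ℝ)/(1+(θsc:ℝ)) with hαdef
  set K : ℝ := (N:ℝ) * 2^(θsc+1) * Real.log (M:ℝ) with hKdef
  have hKpos : 0 < K := by
    have : (0:ℝ) < (N:ℝ) := by exact_mod_cast hN
    positivity
  refine ⟨(θiso/K)^α, Real.rpow_pos_of_pos (div_pos hθ0 hKpos) _, ?_⟩
  intro R hR s hs
  obtain ⟨hs1, hs2⟩ := hs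
  have hR1 : (1:ℝ) ≤ (R:ℝ) := by
    refine le_trans ?_ hR
    exact Real.one_le_rpow (by exact_mod_cast hL0) (by positivity)
  have hRpos : (0:ℝ) < (R:ℝ) := by linarith
  have hlogR : 0 ≤ Real.log (R:ℝ) := Real.log_nonneg hR1
  have hLpos : ∀ k, (0:ℝ) < (LSc l0 L0 θsc k : ℝ) := fun k => by
    exact_mod_cast one_le_LSc (θsc := θsc) hl0 hL0 k
  have hmax : (R:ℝ) ^ θiso < ((LSc l0 L0 θsc (s+1) : ℝ)) ^ N := by
    by_contra h
    push_neg at h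
    have := hs2 (s+1) h
    omega
  constructor
  · -- part (i)
    set E : ℕ := 2^θsc + 1 with hEdef
    have hE2 : 2 ≤ E := by
      have : 1 ≤ 2^θsc := Nat.one_le_two_pow
      omega
    have hEr : (0:ℝ) < (E:ℝ) := by exact_mod_cast (by omega : 0 < E)
    have hNr : (0:ℝ) < (N:ℝ) := by exact_mod_cast hN
    have hstep : ((LSc l0 L0 θsc (s+1) : ℕ) : ℝ) ≤ (4*(l0:ℝ)) * (LSc l0 L0 θsc s : ℝ)^E := by
      have := LSc_succ_le hl0 hL0 hθsc (l0 := l0) (L0 := L0) s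
      push_cast
      exact_mod_cast this
    have hX0 : (0:ℝ) ≤ (4*(l0:ℝ)) * (LSc l0 L0 θsc s : ℝ)^E := by positivity
    have hmain : (R:ℝ) ^ θiso ≤ ((4*(l0:ℝ)) * (LSc l0 L0 θsc s : ℝ)^E) ^ N :=
      le_trans hmax.le (pow_le_pow_left₀ (hLpos _).le hstep N)
    set γ : ℝ := 1/((N:ℝ)*(E:ℝ)) with hγdef
    have hγpos : 0 < γ := by positivity
    have h2 : ((R:ℝ) ^ θiso) ^ γ ≤ (((4*(l0:ℝ)) * (LSc l0 L0 θsc s : ℝ)^E) ^ N) ^ γ := by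
      apply Real.rpow_le_rpow (by positivity) hmain hγpos.le
    have hLHS : ((R:ℝ) ^ θiso) ^ γ = (R:ℝ) ^ (θiso/(3*(d:ℝ)^2*(1 + (2:ℝ)^θsc))) := by
      rw [← Real.rpow_mul hRpos.le]
      congr 1
      rw [hγdef, hNdef, hEdef]
      push_cast
      ring
    have hNE : ((N:ℝ))*γ = 1/(E:ℝ) := by
      rw [hγdef]
      field_simp
    have hRHS : (((4*(l0:ℝ)) * (LSc l0 L0 θsc s : ℝ)^E) ^ N) ^ γ
        ≤ (4*(l0:ℝ)) * (LSc l0 L0 θsc s : ℝ) := by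
      rw [← Real.rpow_natCast ((4*(l0:ℝ)) * (LSc l0 L0 θsc s : ℝ)^E) N,
        ← Real.rpow_mul hX0, hNE,
        Real.mul_rpow (by positivity) (by positivity),
        ← Real.rpow_natCast ((LSc l0 L0 θsc s : ℝ)) E,
        ← Real.rpow_mul (hLpos s).le,
        mul_one_div, div_self hEr.ne', Real.rpow_one]
      have h4l : (1:ℝ) ≤ 4*(l0:ℝ) := by
        have : (1:ℝ) ≤ (l0:ℝ) := by exact_mod_cast hl0
        linarith
      have hle1 : (1:ℝ)/(E:ℝ) ≤ 1 := by
        rw [div_le_one hEr]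
        exact_mod_cast (by omega : 1 ≤ E)
      have := Real.rpow_le_rpow_of_exponent_le h4l hle1
      rw [Real.rpow_one] at this
      exact mul_le_mul_of_nonneg_right this (hLpos s).le
    have hfinal : (R:ℝ) ^ (θiso/(3*(d:ℝ)^2*(1 + (2:ℝ)^θsc)))
        ≤ (4*(l0:ℝ)) * (LSc l0 L0 θsc s : ℝ) := by
      rw [← hLHS]
      exact h2.trans hRHS
    have h4pos : (0:ℝ) < 4*(l0:ℝ) := by
      have : (0:ℝ) < (l0:ℝ) := by exact_mod_cast hl0
      linarith
    calc (1/(4*(l0:ℝ))) * (R:ℝ) ^ (θiso/(3*(d:ℝ)^2*(1 + (2:ℝ)^θsc)))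
        ≤ (1/(4*(l0:ℝ))) * ((4*(l0:ℝ)) * (LSc l0 L0 θsc s : ℝ)) :=
          mul_le_mul_of_nonneg_left hfinal (by positivity)
      _ = (LSc l0 L0 θsc s : ℝ) := by field_simp
  constructor
  · -- part (ii)
    have h1 : LSc l0 L0 θsc (s/2) * LSc l0 L0 θsc (s/2) ≤ L0 * LSc l0 L0 θsc (s/2 + s/2) :=
      LSc_superadd hl0 hL0 _ _
    have h2 : LSc l0 L0 θsc (s/2 + s/2) ≤ LSc l0 L0 θsc s :=
      LSc_mono hl0 hL0 (by omega)
    calc LSc l0 L0 θsc (s/2) ^ 2 = LSc l0 L0 θsc (s/2) * LSc l0 L0 θsc (s/2) := sq _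
      _ ≤ L0 * LSc l0 L0 θsc (s/2 + s/2) := h1
      _ ≤ L0 * LSc l0 L0 θsc s := Nat.mul_le_mul_left _ h2
  · -- part (iii)
    have hlog1 : θiso * Real.log R ≤ (N:ℝ) * Real.log (LSc l0 L0 θsc (s+1) : ℝ) := by
      have h := Real.log_le_log (Real.rpow_pos_of_pos hRpos θiso) hmax.le
      rwa [Real.log_rpow hRpos, Real.log_pow] at h
    have hL_le : ((LSc l0 L0 θsc (s+1) : ℕ) : ℝ) ≤ (M:ℝ) ^ ((s+2)^(θsc+1)) := by
      exact_mod_cast LSc_le_pow hl0 hL0 hθsc (s+1)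
    have hlog2 : Real.log (LSc l0 L0 θsc (s+1) : ℝ) ≤ ((s+2)^(θsc+1) : ℕ) * Real.log (M:ℝ) := by
      have := Real.log_le_log (hLpos (s+1)) hL_le
      rwa [Real.log_pow] at this
    have hexp : ((s+2)^(θsc+1) : ℕ) ≤ 2^(θsc+1) * (s+1)^(θsc+1) := by
      rw [← Nat.mul_pow]
      exact Nat.pow_le_pow_left (by omega) _
    have hbound : θiso * Real.log R ≤ K * ((s:ℝ)+1)^(θsc+1) := by
      have hexp' : (((s+2)^(θsc+1) : ℕ) : ℝ) ≤ 2^(θsc+1) * ((s:ℝ)+1)^(θsc+1) := by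
        exact_mod_cast hexp
      have hNr : (0:ℝ) ≤ (N:ℝ) := by positivity
      calc θiso * Real.log R ≤ (N:ℝ) * Real.log (LSc l0 L0 θsc (s+1) : ℝ) := hlog1
        _ ≤ (N:ℝ) * (((s+2)^(θsc+1) : ℕ) * Real.log (M:ℝ)) :=
            mul_le_mul_of_nonneg_left hlog2 hNr
        _ ≤ (N:ℝ) * ((2^(θsc+1) * ((s:ℝ)+1)^(θsc+1)) * Real.log (M:ℝ)) := by
            apply mul_le_mul_of_nonneg_left _ hNr
            exact mul_le_mul_of_nonneg_right hexp' hlogM.le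
        _ = K * ((s:ℝ)+1)^(θsc+1) := by rw [hKdef]; ring
    -- now raise to power α
    have hθα : (0:ℝ) < 1 + (θsc:ℝ) := by positivity
    have hdiv : θiso/K * Real.log R ≤ ((s:ℝ)+1)^(θsc+1) := by
      rw [div_mul_eq_mul_div, div_le_iff₀ hKpos]
      calc θiso * Real.log R ≤ K * ((s:ℝ)+1)^(θsc+1) := hbound
        _ = ((s:ℝ)+1)^(θsc+1) * K := by ring
    have hfin : (θiso/K * Real.log R) ^ α ≤ (s:ℝ)+1 := by
      have h1 : (θiso/K * Real.log R) ^ α ≤ (((s:ℝ)+1)^(θsc+1)) ^ α :=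
        Real.rpow_le_rpow (by positivity) hdiv (by positivity)
      have h2 : (((s:ℝ)+1)^(θsc+1 : ℕ)) ^ α = (s:ℝ)+1 := by
        rw [← Real.rpow_natCast ((s:ℝ)+1) (θsc+1), ← Real.rpow_mul (by positivity)]
        rw [show ((θsc+1 : ℕ) : ℝ) * α = 1 by
          rw [hαdef]; push_cast; field_simp; ring]
        exact Real.rpow_one _
      rw [h2] at h1
      exact h1
    have hmul : (θiso/K) ^ α * Real.log R ^ α = (θiso/K * Real.log R) ^ α :=
      (Real.mul_rpow (by positivity) hlogR).symm
    have : (θiso/K) ^ α * Real.log R ^ α ≤ (s:ℝ)+1 := by rw [hmul]; exact hfin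
    linarith

end Perco
end

section
/- Let d ≥ 2, let L_0 divide L_s, G_0 = L_0·Z^d, G_s = L_s·Z^d, and let R ≥ 5L_s. Let G ⊆ G_0 ∩ B(0, 2R−L_s) satisfy: (i) for every x ∈ G_s ∩ B(0, 2R−2L_s), the set G ∩ (x+[0,L_s)^d) is connected in G_0 and |G ∩ (x+[0,L_s)^d)| > (1/2)·(L_s/L_0)^d; (ii) there exists γ₄ > 0 such that for every x ∈ G_s ∩ B(0, 2R−3L_s) and every subset a of G ∩ (x+[−L_s,2L_s)^d) with |a| ∈ [ (1/2)(L_s/L_0)^d , (3^d − 1/2)(L_s/L_0)^d ], the boundary of a within G ∩ (x+[−L_s,2L_s)^d) has at least γ₄·(L_s/L_0)^{d−1} elements. Then for every A ⊆ G ∩ B(0, 2R−4L_s) with |A| ≥ 7^{−d}·(L_s/L_0)^{2d²}, one has |∂_G A| ≥ γ·|A|^{(d−1)/d}, where γ = min( 1/14 , c_*·γ₄/(4d·3^d) ) and c_* > 0 is the isoperimetric constant of Z^d (the constant such that every finite nonempty F ⊆ Z^d has at least c_*·|F|^{(d−1)/d} nearest-neighbor edges between F and its complement). -/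
open MeasureTheory Filter
open scoped ENNReal

namespace Perco

variable {d : ℕ}

/-- The event `H`: (a) every vertex of `G_r ∩ B(0,3R)` is `r`-good, and (b) any two points of
`S_{L_s}` lying in a common box `z+[−2L_s,2L_s)^d`, `z ∈ B(0,2R)`, are connected inside
`S ∩ (z+[−4L_s,4L_s)^d)`. -/
def eventH (d : ℕ) (η : ℝ) (r0 l0 L0 θsc s r R : ℕ) : Set (Config d) :=
  {ω | (∀ z ∈ lattice d (LSc l0 L0 θsc r) ∩ ballZ (0 : Pt d) (3*R),
          ω ∉ kBad d η r0 l0 L0 θsc r z) ∧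
       (∀ z ∈ ballZ (0 : Pt d) (2*R),
          ∀ x ∈ Sr ω ((LSc l0 L0 θsc s : ℕ) : ℝ) ∩
                boxI z (-(2*(LSc l0 L0 θsc s) : ℤ)) (2*(LSc l0 L0 θsc s)),
          ∀ y ∈ Sr ω ((LSc l0 L0 θsc s : ℕ) : ℝ) ∩
                boxI z (-(2*(LSc l0 L0 θsc s) : ℤ)) (2*(LSc l0 L0 θsc s)),
          connIn (SS ω ∩ boxI z (-(4*(LSc l0 L0 θsc s) : ℤ)) (4*(LSc l0 L0 θsc s))) x y)}

/-- The boundary of `A` within `g`, in the `L`-renormalized lattice: pairs of vertices of `g` at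
`ℓ¹`-distance `L` with one vertex in `A` and the other in `g ∖ A`. -/
def bdWithin (L : ℕ) (g A : Set (Pt d)) : Set (Pt d × Pt d) :=
  {p | dist1 p.1 p.2 = L ∧ p.1 ∈ A ∧ p.2 ∈ g \ A}

/-- One step of an `L`-renormalized nearest-neighbour path inside `T`. -/
def stepRelL (L : ℕ) (T : Set (Pt d)) (x y : Pt d) : Prop :=
  dist1 x y = L ∧ x ∈ T ∧ y ∈ T

/-- `x` and `y` are connected by an `L`-renormalized nearest-neighbour path inside `T`. -/
def connInL (L : ℕ) (T : Set (Pt d)) (x y : Pt d) : Prop :=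
  x ∈ T ∧ y ∈ T ∧ Relation.ReflTransGen (stepRelL L T) x y

/-- The set `T` is connected as a subgraph of the `L`-renormalized lattice. -/
def IsConnL (L : ℕ) (T : Set (Pt d)) : Prop := ∀ x ∈ T, ∀ y ∈ T, connInL L T x y

/-- The infinite product `f_j(r_0/l_0) = ∏_{i=0}^∞ (1 − 3(r_i/l_i)^j)`. -/
noncomputable def fjProd (r0 l0 θsc j : ℕ) : ℝ :=
  ∏' i : ℕ, (1 - 3 * ((rSc r0 θsc i : ℝ) / (lSc l0 θsc i)) ^ j)

/-- The affine sublattice `x₀ + ∑_{i=1}^j ℤ·e_i`. -/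
def sliceSpan {j : ℕ} (x0 : Pt d) (e : Fin j → Pt d) : Set (Pt d) :=
  {y | ∃ c : Fin j → ℤ, y = x0 + ∑ i, c i • e i}

/-- The vectors `e_1,…,e_j` are pairwise orthogonal with `|e_i|₁ = 1`. -/
def orthoUnit {j : ℕ} (e : Fin j → Pt d) : Prop :=
  (∀ i, dist1 (0 : Pt d) (e i) = 1) ∧
  Pairwise fun i i' => (∑ t, (e i t) * (e i' t)) = 0

section Helpers

variable {d : ℕ}

lemma natAbs_le_of_dist1_le {x y : Pt d} {L : ℕ} (h : dist1 x y ≤ L) (i : Fin d) :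
    (x i - y i).natAbs ≤ L := by
  unfold dist1 at h
  exact le_trans (Finset.single_le_sum (f := fun j => (x j - y j).natAbs)
    (fun j _ => Nat.zero_le _) (Finset.mem_univ i)) h

lemma ballZ_finite (x : Pt d) (R : ℕ) : (ballZ x R).Finite := by
  have hsub : ballZ x R ⊆ Set.pi Set.univ (fun i => Set.Icc (x i - R) (x i + R)) := by
    intro y hy i _
    have h1 : (x i - y i).natAbs ≤ R :=
      le_trans (Finset.le_sup (f := fun j => (x j - y j).natAbs) (Finset.mem_univ i)) hy
    have h2 : (x i - y i) ≤ R ∧ -(R:ℤ) ≤ x i - y i := by omega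
    simp only [Set.mem_Icc]; omega
  exact Set.Finite.subset (Set.Finite.pi (fun i => Set.finite_Icc _ _)) hsub

lemma mem_ballZ_of_dist1_le {x y : Pt d} {L : ℕ} (h : dist1 x y ≤ L) : y ∈ ballZ x L := by
  exact Finset.sup_le (fun i _ => natAbs_le_of_dist1_le h i)

lemma bdWithin_finite {S A : Set (Pt d)} {L : ℕ} (hA : A.Finite) :
    (bdWithin L S A).Finite := by
  have hsub : bdWithin L S A ⊆ ⋃ u ∈ A, {u} ×ˢ ballZ u L := by
    rintro ⟨a, b⟩ ⟨h1, h2, h3⟩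
    exact Set.mem_biUnion h2 ⟨rfl, mem_ballZ_of_dist1_le (le_of_eq h1)⟩
  exact Set.Finite.subset
    (Set.Finite.biUnion hA (fun u _ => (Set.finite_singleton u).prod (ballZ_finite u L))) hsub

lemma edgeBd_finite {S A : Set (Pt d)} (hA : A.Finite) : (edgeBd S A).Finite := by
  have hsub : edgeBd S A ⊆ ⋃ u ∈ A, {u} ×ˢ ballZ u 1 := by
    rintro ⟨a, b⟩ ⟨h1, h2, h3⟩
    exact Set.mem_biUnion h2 ⟨rfl, mem_ballZ_of_dist1_le (le_of_eq h1)⟩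
  exact Set.Finite.subset
    (Set.Finite.biUnion hA (fun u _ => (Set.finite_singleton u).prod (ballZ_finite u 1))) hsub

lemma ediv_eq_of_le_of_lt {L k p : ℤ} (hL : 0 < L) (h1 : L*k ≤ p) (h2 : p < L*k + L) :
    p / L = k := by
  have h3 : p = (p - L*k) + L*k := by ring
  rw [h3, Int.add_mul_ediv_left _ _ (ne_of_gt hL),
    Int.ediv_eq_zero_of_lt (by omega) (by omega), zero_add]

/-- The floor map onto the `L`-lattice. -/
def flo (L : ℕ) (p : Pt d) : Pt d := fun i => (L:ℤ) * (p i / L)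

lemma flo_lattice (L : ℕ) (p : Pt d) : flo L p ∈ lattice d L := fun i => ⟨_, rfl⟩

lemma mem_box_flo {L : ℕ} (hL : 0 < L) (p : Pt d) : p ∈ box (flo L p) L := by
  intro i
  have h0 : (L:ℤ) ≠ 0 := by exact_mod_cast hL.ne'
  have he := Int.mul_ediv_add_emod (p i) L
  have h1 := Int.emod_nonneg (p i) h0
  have h2 := Int.emod_lt_of_pos (p i) (by exact_mod_cast hL : (0:ℤ) < L)
  constructor <;> (simp only [flo]; omega)

lemma flo_eq {L : ℕ} (hL : 0 < L) {x p : Pt d} (hx : x ∈ lattice d L) (hp : p ∈ box x L) :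
    flo L p = x := by
  funext i
  obtain ⟨k, hk⟩ := hx i
  have h1 := (hp i).1
  have h2 := (hp i).2
  show (L:ℤ) * (p i / L) = x i
  rw [ediv_eq_of_le_of_lt (L := (L:ℤ)) (k := k) (by exact_mod_cast hL) (by omega) (by omega)]
  omega

lemma lattice_mono {a b : ℕ} (h : a ∣ b) : lattice d b ⊆ lattice d a :=
  fun x hx i => dvd_trans (Int.natCast_dvd_natCast.mpr h) (hx i)

lemma mem_ballZ_zero_iff {p : Pt d} {n : ℕ} :
    p ∈ ballZ (0 : Pt d) n ↔ ∀ i, (p i).natAbs ≤ n := by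
  show Finset.univ.sup (fun i => ((0:Pt d) i - p i).natAbs) ≤ n ↔ _
  rw [Finset.sup_le_iff]
  constructor
  · intro h i
    have := h i (Finset.mem_univ i)
    simpa using this
  · intro h i _
    simpa using h i

lemma sum_nat_eq_one {f : Fin d → ℕ} (h : ∑ i, f i = 1) :
    ∃ i, f i = 1 ∧ ∀ j, j ≠ i → f j = 0 := by
  have h0 : ∃ i, f i ≠ 0 := by
    by_contra hc
    push_neg at hc
    rw [Finset.sum_eq_zero (fun i _ => hc i)] at h
    omega
  obtain ⟨i, hi⟩ := h0
  have hle : f i ≤ 1 :=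
    h ▸ Finset.single_le_sum (fun j _ => Nat.zero_le _) (Finset.mem_univ i)
  have hfi : f i = 1 := by omega
  refine ⟨i, hfi, fun j hj => ?_⟩
  have hsplit := Finset.add_sum_erase Finset.univ f (Finset.mem_univ i)
  have hz : ∑ x ∈ Finset.univ.erase i, f x = 0 := by omega
  exact (Finset.sum_eq_zero_iff.mp hz) j (Finset.mem_erase.mpr ⟨hj, Finset.mem_univ j⟩)

lemma adj_spec {u v : Pt d} (h : adj u v) :
    ∃ i, (v i = u i + 1 ∨ v i = u i - 1) ∧ ∀ j, j ≠ i → v j = u j := by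
  obtain ⟨i, h1, h2⟩ := sum_nat_eq_one (h : ∑ i, (u i - v i).natAbs = 1)
  refine ⟨i, ?_, fun j hj => ?_⟩
  · have := h1; omega
  · have := h2 j hj; omega

lemma dist1_smul (L : ℕ) (u v : Pt d) :
    dist1 (fun i => (L:ℤ) * u i) (fun i => (L:ℤ) * v i) = L * dist1 u v := by
  unfold dist1
  rw [Finset.mul_sum]
  refine Finset.sum_congr rfl (fun i _ => ?_)
  rw [← mul_sub, Int.natAbs_mul, Int.natAbs_natCast]

lemma exists_boundary_edge {α : Type*} {r : α → α → Prop} {P : α → Prop} {p q : α}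
    (hpq : Relation.ReflTransGen r p q) (hp : P p) (hq : ¬ P q) :
    ∃ u v, r u v ∧ P u ∧ ¬ P v := by
  induction hpq with
  | refl => exact absurd hp hq
  | tail hab hbc ih =>
    rename_i b c
    by_cases hb : P b
    · exact ⟨b, c, hbc, hb, hq⟩
    · exact ih hb

lemma card_le_boxcount {L m : ℕ} (hL : 0 < L) {z : Pt d} (hz : z ∈ lattice d L)
    (s : Finset (Pt d)) (hs : ∀ p ∈ s, p ∈ lattice d L ∧ p ∈ box z (L*m)) :
    s.card ≤ m ^ d := by
  classical
  have hmap : ∀ p ∈ s, (fun (i : Fin d) => ((p i - z i)/L).toNat) ∈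
      Fintype.piFinset (fun _ : Fin d => Finset.range m) := by
    intro p hp
    rw [Fintype.mem_piFinset]
    intro i
    obtain ⟨hplat, hpbox⟩ := hs p hp
    have hb1 := (hpbox i).1
    have hb2 := (hpbox i).2
    have hd1 : (0:ℤ) ≤ p i - z i := by omega
    have hd2 : p i - z i < (L:ℤ) * m := by push_cast at hb2 ⊢; omega
    have hq1 : (0:ℤ) ≤ (p i - z i)/L := Int.ediv_nonneg hd1 (by exact_mod_cast hL.le)
    have hq2 : (p i - z i)/L < m := by
      rw [Int.ediv_lt_iff_lt_mul (by exact_mod_cast hL : (0:ℤ) < L)]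
      linarith [hd2, mul_comm (L:ℤ) (m:ℤ)]
    rw [Finset.mem_range]
    omega
  have hinj : Set.InjOn (fun (p : Pt d) (i : Fin d) => ((p i - z i)/L).toNat) ↑s := by
    intro p hp p' hp' hpp'
    funext i
    have h1 := congrFun hpp' i
    simp only at h1
    obtain ⟨hplat, hpbox⟩ := hs p hp
    obtain ⟨hplat', hpbox'⟩ := hs p' hp'
    have hd1 : (0:ℤ) ≤ p i - z i := by have := (hpbox i).1; omega
    have hd1' : (0:ℤ) ≤ p' i - z i := by have := (hpbox' i).1; omega
    have heq : (p i - z i)/L = (p' i - z i)/L := by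
      have hq1 : (0:ℤ) ≤ (p i - z i)/L := Int.ediv_nonneg hd1 (by exact_mod_cast hL.le)
      have hq1' : (0:ℤ) ≤ (p' i - z i)/L := Int.ediv_nonneg hd1' (by exact_mod_cast hL.le)
      omega
    have hdvd : (L:ℤ) ∣ (p i - z i) := dvd_sub (hplat i) (hz i)
    have hdvd' : (L:ℤ) ∣ (p' i - z i) := dvd_sub (hplat' i) (hz i)
    have e1 : (L:ℤ) * ((p i - z i)/L) = p i - z i := Int.mul_ediv_cancel' hdvd
    have e2 : (L:ℤ) * ((p' i - z i)/L) = p' i - z i := Int.mul_ediv_cancel' hdvd'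
    rw [heq] at e1
    omega
  have key := Finset.card_le_card_of_injOn _ hmap hinj
  refine le_trans key (le_of_eq ?_)
  simp [Fintype.card_piFinset]

lemma boxI_card_le {L0 m Ls : ℕ} (hL0 : 0 < L0) (hm : 1 ≤ m) (hLsm : Ls = L0 * m)
    {s : Set (Pt d)} (hs : s.Finite) (hslat : s ⊆ lattice d L0)
    {x y : Pt d} (hsbox : s ⊆ boxI x (-(Ls:ℤ)) (2*Ls))
    (hx : x ∈ lattice d Ls) (hy : y ∈ lattice d Ls)
    (hyadj : ∀ i, (y i - x i).natAbs ≤ Ls) :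
    s.ncard + m ^ d ≤ (s ∩ box y Ls).ncard + 3 ^ d * m ^ d := by
  classical
  have hLs : 0 < Ls := by
    rw [hLsm]; exact Nat.mul_pos hL0 hm
  have hLsZ : (0:ℤ) < (Ls:ℤ) := by exact_mod_cast hLs
  set sF := hs.toFinset with hsF
  set corners := sF.image (flo Ls) with hcorners
  -- every corner is close to x
  have hcorner_form : ∀ z ∈ corners, z ∈ lattice d Ls ∧
      ∀ i, -(Ls:ℤ) ≤ z i - x i ∧ z i - x i ≤ Ls := by
    intro z hz
    obtain ⟨p, hp, hpz⟩ := Finset.mem_image.mp hz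
    have hpmem : p ∈ s := hs.mem_toFinset.mp hp
    refine ⟨hpz ▸ flo_lattice Ls p, fun i => ?_⟩
    have hb := hsbox hpmem i
    obtain ⟨k, hk⟩ := hx i
    have hz1 : z i = (Ls:ℤ) * (p i / Ls) := by rw [← hpz]; rfl
    have hq1 : k - 1 ≤ p i / Ls := by
      rw [Int.le_ediv_iff_mul_le hLsZ]
      nlinarith [hb.1, hb.2, hk]
    have hq2 : p i / Ls < k + 2 := by
      rw [Int.ediv_lt_iff_lt_mul hLsZ]
      nlinarith [hb.1, hb.2, hk]
    constructor <;> nlinarith [hq1, hq2]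
  -- fiberwise decomposition of s over corners
  have hsum : sF.card = ∑ z ∈ corners, (sF.filter fun p => flo Ls p = z).card :=
    Finset.card_eq_sum_card_fiberwise (fun p hp => Finset.mem_image_of_mem _ hp)
  -- each fiber has at most m^d points
  have hfib_le : ∀ z ∈ corners, (sF.filter fun p => flo Ls p = z).card ≤ m ^ d := by
    intro z hz
    refine card_le_boxcount hL0 (lattice_mono ⟨m, hLsm⟩ ((hcorner_form z hz).1)) _ ?_
    intro p hp
    rw [Finset.mem_filter] at hp
    have hpmem : p ∈ s := hs.mem_toFinset.mp hp.1
    refine ⟨hslat hpmem, ?_⟩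
    rw [← hLsm, ← hp.2]
    exact mem_box_flo hLs p
  -- quotient map g
  set g : Pt d → (Fin d → ℤ) := fun z i => (z i - x i) / Ls with hg
  have hgrec : ∀ z, z ∈ lattice d Ls → ∀ i, z i = x i + (Ls:ℤ) * g z i := by
    intro z hzl i
    have hdvd : (Ls:ℤ) ∣ (z i - x i) := dvd_sub (hzl i) (hx i)
    have := Int.mul_ediv_cancel' hdvd
    simp only [hg]
    omega
  have hgmem : ∀ z, z ∈ lattice d Ls → (∀ i, -(Ls:ℤ) ≤ z i - x i ∧ z i - x i ≤ Ls) →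
      g z ∈ Fintype.piFinset (fun _ : Fin d => ({-1,0,1} : Finset ℤ)) := by
    intro z hzl hzb
    rw [Fintype.mem_piFinset]
    intro i
    obtain ⟨q, hq⟩ := dvd_sub (hzl i) (hx i)
    have hb1 := (hzb i).1
    have hb2 := (hzb i).2
    have hq1 : -1 ≤ q := by nlinarith [hq, hb1]
    have hq2 : q ≤ 1 := by nlinarith [hq, hb2]
    have hgzq : g z i = q := by
      simp only [hg, hq]
      exact Int.mul_ediv_cancel_left q (ne_of_gt hLsZ)
    rw [hgzq]
    simp only [Finset.mem_insert, Finset.mem_singleton]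
    omega
  have hyb : ∀ i, -(Ls:ℤ) ≤ y i - x i ∧ y i - x i ≤ Ls := by
    intro i
    have := hyadj i
    omega
  have hgy : g y ∈ Fintype.piFinset (fun _ : Fin d => ({-1,0,1} : Finset ℤ)) :=
    hgmem y hy hyb
  have herase_card : (corners.erase y).card ≤ 3 ^ d - 1 := by
    have hsub : ∀ z ∈ corners.erase y,
        g z ∈ (Fintype.piFinset (fun _ : Fin d => ({-1,0,1} : Finset ℤ))).erase (g y) := by
      intro z hz
      rw [Finset.mem_erase] at hz ⊢
      obtain ⟨hzy, hzc⟩ := hz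
      obtain ⟨hzl, hzb⟩ := hcorner_form z hzc
      refine ⟨?_, hgmem z hzl hzb⟩
      intro hgzy
      exact hzy (by funext i; rw [hgrec z hzl i, hgzy, ← hgrec y hy i])
    have hinj : Set.InjOn g ↑(corners.erase y) := by
      intro z hz z' hz' hzz'
      have hzl := (hcorner_form z (Finset.mem_of_mem_erase hz)).1
      have hzl' := (hcorner_form z' (Finset.mem_of_mem_erase hz')).1
      funext i
      rw [hgrec z hzl i, hgrec z' hzl' i, hzz']
    have hle := Finset.card_le_card_of_injOn g hsub hinj
    have hcard : ((Fintype.piFinset (fun _ : Fin d => ({-1,0,1} : Finset ℤ))).erase (g y)).card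
        = 3 ^ d - 1 := by
      rw [Finset.card_erase_of_mem hgy, Fintype.card_piFinset]
      simp
    omega
  -- bound the y-fiber by the intersection with box y Ls
  have hfy : (sF.filter fun p => flo Ls p = y).card ≤ (s ∩ box y Ls).ncard := by
    rw [← Set.ncard_coe_finset]
    refine Set.ncard_le_ncard ?_ (hs.subset Set.inter_subset_left)
    intro p hp
    rw [Finset.coe_filter, Set.mem_setOf_eq] at hp
    exact ⟨hs.mem_toFinset.mp hp.1, hp.2 ▸ mem_box_flo hLs p⟩
  have hsplit : ∑ z ∈ corners, (sF.filter fun p => flo Ls p = z).card ≤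
      (sF.filter fun p => flo Ls p = y).card +
      ∑ z ∈ corners.erase y, (sF.filter fun p => flo Ls p = z).card := by
    by_cases hyc : y ∈ corners
    · rw [← Finset.add_sum_erase _ _ hyc]
    · rw [Finset.erase_eq_of_notMem hyc]
      omega
  have hsum_erase : ∑ z ∈ corners.erase y, (sF.filter fun p => flo Ls p = z).card ≤
      (3 ^ d - 1) * m ^ d := by
    calc ∑ z ∈ corners.erase y, (sF.filter fun p => flo Ls p = z).card
        ≤ (corners.erase y).card * m ^ d := by
          rw [← smul_eq_mul]
          exact Finset.sum_le_card_nsmul _ _ _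
            (fun z hz => hfib_le z (Finset.mem_of_mem_erase hz))
      _ ≤ (3 ^ d - 1) * m ^ d := Nat.mul_le_mul_right _ herase_card
  have hncard : s.ncard = sF.card := Set.ncard_eq_toFinset_card _ hs
  have h31 : 1 ≤ 3 ^ d := Nat.one_le_pow _ _ (by norm_num)
  have hmul : (3 ^ d - 1) * m ^ d + 1 * m ^ d = 3 ^ d * m ^ d := by
    rw [← Nat.add_mul, Nat.sub_add_cancel h31]
  omega

lemma rpow_split {a : ℝ} (ha : 0 < a) {dn : ℕ} (hd : 1 ≤ dn) :
    a ^ (((dn:ℝ)-1)/dn) = a / a ^ (1/(dn:ℝ)) := by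
  have hdn : ((dn:ℝ)) ≠ 0 := by
    have h0 : (0:ℝ) < dn := by exact_mod_cast hd
    exact ne_of_gt h0
  rw [eq_div_iff (ne_of_gt (Real.rpow_pos_of_pos ha _)), ← Real.rpow_add ha]
  rw [← add_div, sub_add_cancel, div_self hdn, Real.rpow_one]

lemma endgame1 {dn : ℕ} (hd : 2 ≤ dn) {M a : ℝ} (hM : 1 ≤ M)
    (ha : (7:ℝ)^(-(dn:ℝ)) * M^(2*dn^2) ≤ a) :
    (1/14) * a ^ (((dn:ℝ)-1)/dn) ≤ a / M^dn := by
  have hM0 : (0:ℝ) < M := lt_of_lt_of_le one_pos hM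
  have ha0 : (0:ℝ) < a := lt_of_lt_of_le (by positivity) ha
  have hdR : (0:ℝ) < (dn:ℝ) := by
    have h0 : 0 < dn := by omega
    exact_mod_cast h0
  have hdne : ((dn:ℝ)) ≠ 0 := ne_of_gt hdR
  have hroot : M^(2*dn) / 7 ≤ a ^ (1/(dn:ℝ)) := by
    have h1 : ((7:ℝ)^(-(dn:ℝ)) * M^(2*dn^2)) ^ (1/(dn:ℝ)) ≤ a ^ (1/(dn:ℝ)) :=
      Real.rpow_le_rpow (by positivity) ha (by positivity)
    have h2 : ((7:ℝ)^(-(dn:ℝ)) * M^(2*dn^2)) ^ (1/(dn:ℝ)) = M^(2*dn) / 7 := by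
      rw [Real.mul_rpow (by positivity) (by positivity)]
      rw [← Real.rpow_natCast M (2*dn^2), ← Real.rpow_natCast M (2*dn)]
      rw [← Real.rpow_mul (by norm_num : (0:ℝ) ≤ 7), ← Real.rpow_mul hM0.le]
      have e1 : -(dn:ℝ) * (1/(dn:ℝ)) = -1 := by field_simp
      have e2 : ((2*dn^2 : ℕ):ℝ) * (1/(dn:ℝ)) = ((2*dn : ℕ):ℝ) := by
        push_cast
        field_simp
      rw [e1, e2, Real.rpow_neg_one]
      ring
    rw [h2] at h1
    exact h1
  have hXpos : (0:ℝ) < a ^ (1/(dn:ℝ)) := Real.rpow_pos_of_pos ha0 _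
  have hMd : M^dn ≤ 14 * a ^ (1/(dn:ℝ)) := by
    have h3 : M^dn ≤ M^(2*dn) := pow_le_pow_right₀ hM (by omega)
    nlinarith [hroot]
  rw [rpow_split ha0 (by omega)]
  have heq : (1/14) * (a / a ^ (1/(dn:ℝ))) = a / (14 * a ^ (1/(dn:ℝ))) := by
    field_simp
  rw [heq]
  exact div_le_div_of_nonneg_left ha0.le (by positivity) hMd

lemma endgame2 {dn : ℕ} (hd : 2 ≤ dn) {M a cs g4 Fc Vc Wc : ℝ}
    (hM : 1 ≤ M) (ha0 : 0 < a) (hcs : 0 < cs) (hg4 : 0 < g4)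
    (hVc : 0 ≤ Vc)
    (hF : a / (2*M^dn) ≤ Fc)
    (hV : cs * Fc ^ (((dn:ℝ)-1)/dn) ≤ Vc * (2*(dn:ℝ)))
    (hW : Vc * (g4 * M^(dn-1)) ≤ 3^dn * Wc) :
    cs * g4 / (4*(dn:ℝ)*3^dn) * a ^ (((dn:ℝ)-1)/dn) ≤ Wc := by
  set α := ((dn:ℝ)-1)/dn with hα
  have hM0 : (0:ℝ) < M := lt_of_lt_of_le one_pos hM
  have hdR : (0:ℝ) < (dn:ℝ) := by
    have h0 : 0 < dn := by omega
    exact_mod_cast h0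
  have hd2R : (2:ℝ) ≤ (dn:ℝ) := by exact_mod_cast hd
  have hα0 : 0 ≤ α := by
    rw [hα]
    apply div_nonneg _ hdR.le
    linarith
  have hα1 : α ≤ 1 := by
    rw [hα, div_le_one hdR]
    linarith
  have hFc0 : 0 < Fc := lt_of_lt_of_le (by positivity) hF
  have hkey : a ^ α / 2 ≤ M^(dn-1) * Fc ^ α := by
    have h1 : (a / (2*M^dn)) ^ α ≤ Fc ^ α := Real.rpow_le_rpow (by positivity) hF hα0
    have h3 : ((M^dn : ℝ))^α = M^(dn-1) := by
      rw [← Real.rpow_natCast M dn, ← Real.rpow_mul hM0.le, ← Real.rpow_natCast M (dn-1)]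
      congr 1
      have hcast : ((dn - 1 : ℕ):ℝ) = (dn:ℝ) - 1 := by
        have h1' : 1 ≤ dn := by omega
        push_cast [h1']
        ring
      rw [hα, hcast]
      field_simp
    have h2 : (a / (2*M^dn)) ^ α = a^α / ((2:ℝ)^α * M^(dn-1)) := by
      rw [Real.div_rpow ha0.le (by positivity), Real.mul_rpow (by norm_num) (by positivity), h3]
    have h4 : (2:ℝ)^α ≤ 2 := by
      calc (2:ℝ)^α ≤ (2:ℝ)^(1:ℝ) := Real.rpow_le_rpow_of_exponent_le one_le_two hα1
        _ = 2 := Real.rpow_one 2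
    have h2α0 : (0:ℝ) < (2:ℝ)^α := Real.rpow_pos_of_pos (by norm_num) _
    have h5 : a^α / (2 * M^(dn-1)) ≤ Fc ^ α := by
      refine le_trans ?_ (h2 ▸ h1)
      apply div_le_div_of_nonneg_left (by positivity) (by positivity)
      apply mul_le_mul_of_nonneg_right h4 (by positivity)
    calc a ^ α / 2 = M^(dn-1) * (a^α / (2 * M^(dn-1))) := by
          field_simp
      _ ≤ M^(dn-1) * Fc ^ α := by
          apply mul_le_mul_of_nonneg_left h5 (by positivity)
  have s1 : cs * Fc ^ α / (2*(dn:ℝ)) ≤ Vc := (div_le_iff₀ (by positivity)).mpr hV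
  have s2 : cs*g4/(2*(dn:ℝ)) * (a^α/2) ≤ cs*g4/(2*(dn:ℝ)) * (M^(dn-1)*Fc^α) := by
    apply mul_le_mul_of_nonneg_left hkey (by positivity)
  have s3 : cs*g4/(2*(dn:ℝ)) * (M^(dn-1)*Fc^α) = (cs*Fc^α/(2*(dn:ℝ))) * (g4 * M^(dn-1)) := by
    ring
  have s4 : (cs*Fc^α/(2*(dn:ℝ))) * (g4*M^(dn-1)) ≤ Vc * (g4*M^(dn-1)) := by
    apply mul_le_mul_of_nonneg_right s1 (by positivity)
  have s5 : cs*g4/(2*(dn:ℝ))*(a^α/2) ≤ 3^dn * Wc := by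
    rw [s3] at s2
    linarith
  have hP : (0:ℝ) < (3:ℝ)^dn := by positivity
  have heq : cs*g4/(4*(dn:ℝ)*3^dn)*a^α = (cs*g4/(2*(dn:ℝ))*(a^α/2))/(3:ℝ)^dn := by
    field_simp
    ring
  rw [heq, div_le_iff₀ hP]
  linarith

end Helpers

set_option maxHeartbeats 1000000 in
/-- Lemma 3.3, deterministic form. If `G ⊆ G_0 ∩ B(0,2R−L_s)` has dense and
connected restrictions to `L_s`-boxes and satisfies the local isoperimetric inequality of
Lemma 3.5 in `3L_s`-boxes, then every `A ⊆ G ∩ B(0,2R−4L_s)` with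
`|A| ≥ 7^{−d}(L_s/L_0)^{2d²}` satisfies `|∂_G A| ≥ γ·|A|^{(d−1)/d}`, where
`γ = min(1/14, c_*·γ₄/(4d·3^d))`. -/
theorem stmt10 (d : ℕ) (hd : 2 ≤ d) (L0 Ls R : ℕ) (hL0 : 0 < L0) (hdvd : L0 ∣ Ls)
    (hR : 5 * Ls ≤ R)
    (cstar : ℝ) (hcstar : 0 < cstar)
    -- `c_*` is an isoperimetric constant for `ℤ^d`
    (hisoZ : ∀ F : Set (Pt d), F.Finite → F.Nonempty →
      cstar * (F.ncard : ℝ) ^ (((d:ℝ) - 1)/d) ≤ (edgeBd Set.univ F).ncard)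
    (G : Set (Pt d))
    (hGsub : G ⊆ lattice d L0 ∩ ballZ (0 : Pt d) (2*R - Ls))
    -- (i) density and connectivity in `L_s`-boxes
    (hGdens : ∀ x ∈ lattice d Ls ∩ ballZ (0 : Pt d) (2*R - 2*Ls),
      IsConnL L0 (G ∩ box x Ls) ∧
      ((1:ℝ)/2) * ((Ls : ℝ)/(L0 : ℝ)) ^ d < ((G ∩ box x Ls).ncard : ℝ))
    -- (ii) the local isoperimetric inequality in `3L_s`-boxes
    (γ₄ : ℝ) (hγ₄ : 0 < γ₄)
    (hloc : ∀ x ∈ lattice d Ls ∩ ballZ (0 : Pt d) (2*R - 3*Ls),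
      ∀ A : Set (Pt d), A ⊆ G ∩ boxI x (-(Ls:ℤ)) (2*Ls) →
        ((1:ℝ)/2) * ((Ls : ℝ)/(L0 : ℝ)) ^ d ≤ (A.ncard : ℝ) →
        (A.ncard : ℝ) ≤ ((3:ℝ)^d - 1/2) * ((Ls : ℝ)/(L0 : ℝ)) ^ d →
        γ₄ * ((Ls : ℝ)/(L0 : ℝ)) ^ (d-1) ≤
          ((bdWithin L0 (G ∩ boxI x (-(Ls:ℤ)) (2*Ls)) A).ncard : ℝ)) :
    ∀ A : Set (Pt d), A ⊆ G ∩ ballZ (0 : Pt d) (2*R - 4*Ls) →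
      (7:ℝ)^(-(d:ℝ)) * ((Ls : ℝ)/(L0 : ℝ)) ^ (2*d^2) ≤ (A.ncard : ℝ) →
      min ((1:ℝ)/14) (cstar * γ₄ / (4*(d:ℝ)*3^d)) * (A.ncard : ℝ) ^ (((d:ℝ) - 1)/d) ≤
        ((bdWithin L0 G A).ncard : ℝ) := by
  intro A hAsub hAbig
  classical
  have hd0 : 0 < d := by omega
  -- the case `Ls = 0` contradicts the density hypothesis
  rcases Nat.eq_zero_or_pos Ls with hLs0 | hLs
  · exfalso
    have h0mem : (0 : Pt d) ∈ lattice d Ls ∩ ballZ (0 : Pt d) (2*R - 2*Ls) := by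
      constructor
      · intro i
        exact dvd_zero _
      · rw [mem_ballZ_zero_iff]
        intro i
        simp [Pi.zero_apply]
    have hdens := (hGdens 0 h0mem).2
    have hbox : G ∩ box (0 : Pt d) Ls = ∅ := by
      ext p
      simp only [Set.mem_inter_iff, Set.mem_empty_iff_false, iff_false, not_and]
      intro _ hp
      have := hp ⟨0, hd0⟩
      simp only [Pi.zero_apply] at this
      omega
    rw [hbox, hLs0] at hdens
    simp only [Set.ncard_empty, Nat.cast_zero, zero_div,
      zero_pow (by omega : d ≠ 0)] at hdens
    norm_num at hdens
  -- now `Ls > 0`; write `Ls = L0 * m`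
  obtain ⟨m, hLsm⟩ := hdvd
  have hm : 1 ≤ m := by
    rcases Nat.eq_zero_or_pos m with h | h
    · subst h
      simp at hLsm
      omega
    · omega
  have hL0R : (0:ℝ) < L0 := by exact_mod_cast hL0
  have hm0R : (0:ℝ) < (m:ℝ) := by exact_mod_cast (by omega : 0 < m)
  have hmR : (1:ℝ) ≤ (m:ℝ) := by exact_mod_cast hm
  have hM : ((Ls:ℝ)/(L0:ℝ)) = (m:ℝ) := by
    rw [hLsm]
    push_cast
    field_simp
  rw [hM] at hAbig
  have ha0 : (0:ℝ) < (A.ncard:ℝ) :=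
    lt_of_lt_of_le (mul_pos (Real.rpow_pos_of_pos (by norm_num) _) (pow_pos hm0R _)) hAbig
  have hLsZ : (0:ℤ) < (Ls:ℤ) := by exact_mod_cast hLs
  -- finiteness
  have hAfin : A.Finite := (ballZ_finite (0:Pt d) (2*R-4*Ls)).subset (fun p hp => (hAsub hp).2)
  have hGfin : G.Finite := (ballZ_finite (0:Pt d) (2*R-Ls)).subset (fun p hp => (hGsub hp).2)
  have hAlat : ∀ p ∈ A, p ∈ lattice d L0 := fun p hp => (hGsub (hAsub hp).1).1
  have hAG : A ⊆ G := fun p hp => (hAsub hp).1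
  set K := hAfin.toFinset with hK
  have hAK : A.ncard = K.card := Set.ncard_eq_toFinset_card _ hAfin
  have hKmem : ∀ p : Pt d, p ∈ K ↔ p ∈ A := fun p => by
    rw [hK]; exact hAfin.mem_toFinset
  clear_value K
  have hWfin : (bdWithin L0 G A).Finite := bdWithin_finite hAfin
  set WF := hWfin.toFinset with hWF
  have hWcard : (bdWithin L0 G A).ncard = WF.card := Set.ncard_eq_toFinset_card _ hWfin
  have hWFmem : ∀ e : Pt d × Pt d, e ∈ WF ↔ e ∈ bdWithin L0 G A := fun e => by
    rw [hWF]; exact hWfin.mem_toFinset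
  clear_value WF
  -- coarse graining
  set T := K.image (flo Ls) with hT
  set fib : Pt d → Finset (Pt d) := fun z => K.filter (fun p => flo Ls p = z) with hfib
  have hTlat : ∀ z ∈ T, z ∈ lattice d Ls := by
    intro z hz
    obtain ⟨p, -, hpz⟩ := Finset.mem_image.mp hz
    exact hpz ▸ flo_lattice Ls p
  have hfibsum : K.card = ∑ z ∈ T, (fib z).card :=
    Finset.card_eq_sum_card_fiberwise (fun p hp => Finset.mem_image_of_mem _ hp)
  have hfibset : ∀ z ∈ lattice d Ls, (A ∩ box z Ls : Set (Pt d)) = ↑(fib z) := by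
    intro z hz
    ext p
    simp only [Set.mem_inter_iff, hfib, Finset.coe_filter, Set.mem_setOf_eq, hKmem]
    constructor
    · rintro ⟨h1, h2⟩
      exact ⟨h1, flo_eq hLs hz h2⟩
    · rintro ⟨h1, h2⟩
      exact ⟨h1, h2 ▸ mem_box_flo hLs p⟩
  have hfibcard : ∀ z ∈ lattice d Ls, (A ∩ box z Ls).ncard = (fib z).card := by
    intro z hz
    rw [hfibset z hz, Set.ncard_coe_finset]
  have hfible : ∀ z ∈ T, (fib z).card ≤ m ^ d := by
    intro z hz
    refine card_le_boxcount hL0 (lattice_mono ⟨m, hLsm⟩ (hTlat z hz)) _ ?_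
    intro p hp
    simp only [hfib] at hp
    rw [Finset.mem_filter] at hp
    refine ⟨hAlat p ((hKmem _).mp hp.1), ?_⟩
    rw [← hLsm, ← hp.2]
    exact mem_box_flo hLs p
  have hTball3 : ∀ z ∈ T, z ∈ ballZ (0:Pt d) (2*R - 3*Ls) := by
    intro z hz
    obtain ⟨p, hpK, hpz⟩ := Finset.mem_image.mp hz
    have hpA : p ∈ A := (hKmem _).mp hpK
    have hpb : ∀ i, (p i).natAbs ≤ 2*R - 4*Ls := mem_ballZ_zero_iff.mp (hAsub hpA).2
    rw [mem_ballZ_zero_iff]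
    intro i
    have h1 : z i ≤ p i := by
      rw [← hpz]
      exact ((mem_box_flo hLs p) i).1
    have h2 : p i < z i + Ls := by
      rw [← hpz]
      exact ((mem_box_flo hLs p) i).2
    have hb := hpb i
    omega
  -- dense and sparse boxes
  set D := T.filter (fun z => m ^ d ≤ 2 * (fib z).card) with hD
  set S := T.filter (fun z => ¬ (m ^ d ≤ 2 * (fib z).card)) with hS
  have hDS : ∑ z ∈ D, (fib z).card + ∑ z ∈ S, (fib z).card = K.card := by
    rw [hfibsum]
    exact Finset.sum_filter_add_sum_filter_not T _ _
  have hcases : K.card ≤ 2 * ∑ z ∈ S, (fib z).card ∨ K.card ≤ 2 * ∑ z ∈ D, (fib z).card := by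
    omega
  rcases hcases with hsp | hde
  · -- SPARSE CASE
    have hedge : ∀ z ∈ S, ∃ e ∈ WF, e.1 ∈ box z Ls := by
      intro z hzS
      have hzT : z ∈ T := Finset.filter_subset _ _ hzS
      have hzsparse : ¬ (m ^ d ≤ 2 * (fib z).card) := (Finset.mem_filter.mp hzS).2
      have hzlat := hTlat z hzT
      have hzball : z ∈ ballZ (0:Pt d) (2*R - 2*Ls) := by
        have hzb := mem_ballZ_zero_iff.mp (hTball3 z hzT)
        rw [mem_ballZ_zero_iff]
        intro i
        have := hzb i
        omega
      obtain ⟨hconn, hdens⟩ := hGdens z ⟨hzlat, hzball⟩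
      rw [hM] at hdens
      obtain ⟨p, hpK, hpz⟩ := Finset.mem_image.mp hzT
      have hpA : p ∈ A := (hKmem _).mp hpK
      have hpbox : p ∈ box z Ls := by
        rw [← hpz]
        exact mem_box_flo hLs p
      have hlt : (A ∩ box z Ls).ncard < (G ∩ box z Ls).ncard := by
        have h1 : ((A ∩ box z Ls).ncard : ℝ) < ((G ∩ box z Ls).ncard : ℝ) := by
          rw [hfibcard z hzlat]
          have h2 : ((fib z).card : ℝ) < (1:ℝ)/2 * (m:ℝ)^d := by
            have h3 : 2 * (fib z).card + 1 ≤ m ^ d := by omega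
            have h4 : 2 * ((fib z).card:ℝ) + 1 ≤ (m:ℝ)^d := by exact_mod_cast h3
            linarith
          linarith
        exact_mod_cast h1
      have hnsub : ¬ (G ∩ box z Ls ⊆ A ∩ box z Ls) := by
        intro hsub2
        have := Set.ncard_le_ncard hsub2 (hAfin.subset Set.inter_subset_left)
        omega
      obtain ⟨q, hqG, hqA⟩ := Set.not_subset.mp hnsub
      have hqnA : q ∉ A := fun h => hqA ⟨h, hqG.2⟩
      have hpGbox : p ∈ G ∩ box z Ls := ⟨hAG hpA, hpbox⟩
      obtain ⟨-, -, hpath⟩ := hconn p hpGbox q hqG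
      obtain ⟨u, v, hstep, huA, hvA⟩ :=
        exists_boundary_edge (P := fun w => w ∈ A) hpath hpA hqnA
      obtain ⟨hdist, huG, hvG⟩ := hstep
      refine ⟨(u, v), ?_, huG.2⟩
      exact (hWFmem _).mpr ⟨hdist, huA, hvG.1, hvA⟩
    have hScard : S.card ≤ WF.card := by
      have hsub : S ⊆ WF.image (fun e => flo Ls e.1) := by
        intro z hzS
        obtain ⟨e, heW, hebox⟩ := hedge z hzS
        refine Finset.mem_image.mpr ⟨e, heW, ?_⟩
        exact flo_eq hLs (hTlat z (Finset.filter_subset _ _ hzS)) hebox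
      exact le_trans (Finset.card_le_card hsub) Finset.card_image_le
    have hKS : K.card ≤ S.card * m ^ d := by
      calc K.card ≤ 2 * ∑ z ∈ S, (fib z).card := hsp
        _ = ∑ z ∈ S, 2 * (fib z).card := by rw [Finset.mul_sum]
        _ ≤ S.card * m ^ d := by
            rw [← smul_eq_mul]
            refine Finset.sum_le_card_nsmul _ _ _ (fun z hz => ?_)
            have := (Finset.mem_filter.mp hz).2
            omega
    have hmin : min ((1:ℝ)/14) (cstar * γ₄ / (4*(d:ℝ)*3^d)) ≤ 1/14 := min_le_left _ _
    have hfrac : (A.ncard : ℝ) / (m:ℝ)^d ≤ (WF.card : ℝ) := by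
      have h1 : (A.ncard : ℝ) ≤ (S.card : ℝ) * (m:ℝ)^d := by
        rw [hAK]
        exact_mod_cast hKS
      have h2 : (0:ℝ) < (m:ℝ)^d := pow_pos hm0R d
      rw [div_le_iff₀ h2]
      calc (A.ncard:ℝ) ≤ (S.card:ℝ) * (m:ℝ)^d := h1
        _ ≤ (WF.card:ℝ) * (m:ℝ)^d := by
            apply mul_le_mul_of_nonneg_right _ h2.le
            exact_mod_cast hScard
    have he1 := endgame1 hd hmR hAbig
    rw [hWcard]
    calc min ((1:ℝ)/14) (cstar * γ₄ / (4*(d:ℝ)*3^d)) * (A.ncard:ℝ)^(((d:ℝ)-1)/d)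
        ≤ (1/14) * (A.ncard:ℝ)^(((d:ℝ)-1)/d) := by
          apply mul_le_mul_of_nonneg_right hmin (Real.rpow_nonneg (Nat.cast_nonneg _) _)
      _ ≤ (A.ncard:ℝ) / (m:ℝ)^d := he1
      _ ≤ (WF.card : ℝ) := hfrac
  · -- DENSE CASE
    have hDne : D.Nonempty := by
      rcases Finset.eq_empty_or_nonempty D with h | h
      · exfalso
        rw [h, Finset.sum_empty] at hde
        have hK0 : K.card = 0 := by omega
        rw [hAK, hK0] at ha0
        norm_num at ha0
      · exact h
    set ψ : Pt d → Pt d := fun x i => x i / (Ls:ℤ) with hψ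
    set sc : Pt d → Pt d := fun u i => (Ls:ℤ) * u i with hsc
    have hsc_psi : ∀ x ∈ lattice d Ls, sc (ψ x) = x := by
      intro x hx
      funext i
      exact Int.mul_ediv_cancel' (hx i)
    have hpsi_sc : ∀ u, ψ (sc u) = u := by
      intro u
      funext i
      exact Int.mul_ediv_cancel_left _ (ne_of_gt hLsZ)
    set F := D.image ψ with hF
    have hFcard : F.card = D.card := by
      apply Finset.card_image_of_injOn
      intro x hx x' hx' hxx'
      have h1 := hsc_psi x (hTlat x (Finset.filter_subset _ _ hx))
      have h2 := hsc_psi x' (hTlat x' (Finset.filter_subset _ _ hx'))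
      rw [← h1, ← h2, hxx']
    have hscD : ∀ u ∈ F, sc u ∈ D := by
      intro u hu
      obtain ⟨x, hx, hxu⟩ := Finset.mem_image.mp hu
      rw [← hxu, hsc_psi x (hTlat x (Finset.filter_subset _ _ hx))]
      exact hx
    have hFfin : (↑F : Set (Pt d)).Finite := F.finite_toSet
    have hFne : (↑F : Set (Pt d)).Nonempty := by
      obtain ⟨x, hx⟩ := hDne
      exact ⟨ψ x, Finset.mem_coe.mpr (Finset.mem_image_of_mem _ hx)⟩
    have hiso := hisoZ ↑F hFfin hFne
    rw [Set.ncard_coe_finset] at hiso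
    set Vf := F.filter (fun u => ∃ v, adj u v ∧ v ∉ F) with hVf
    have hEfin : (edgeBd Set.univ (↑F : Set (Pt d))).Finite := edgeBd_finite hFfin
    have hEbd : hEfin.toFinset.card ≤ Vf.card * (d * 2) := by
      set nbrF : Pt d → Finset (Pt d) := fun u => Finset.image
        (fun q : Fin d × Bool => Function.update u q.1 (u q.1 + if q.2 then 1 else -1))
        Finset.univ with hnbrF
      have hsub : hEfin.toFinset ⊆ Vf.biUnion (fun u => {u} ×ˢ nbrF u) := by
        intro e he
        rw [Set.Finite.mem_toFinset] at he
        obtain ⟨hadj, heF, heUF⟩ := he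
        have he2 : e.2 ∉ F := fun h => heUF.2 (Finset.mem_coe.mpr h)
        have he1 : e.1 ∈ Vf := Finset.mem_filter.mpr ⟨Finset.mem_coe.mp heF, ⟨e.2, hadj, he2⟩⟩
        rw [Finset.mem_biUnion]
        refine ⟨e.1, he1, ?_⟩
        rw [Finset.mem_product]
        refine ⟨Finset.mem_singleton_self _, ?_⟩
        obtain ⟨i, hcase, hrest⟩ := adj_spec hadj
        simp only [hnbrF]
        apply Finset.mem_image.mpr
        rcases hcase with h | h
        · refine ⟨(i, true), Finset.mem_univ _, ?_⟩
          funext j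
          rw [Function.update_apply]
          by_cases hj : j = i
          · subst hj
            simp [h, sub_eq_add_neg]
          · simp [hj, hrest j hj]
        · refine ⟨(i, false), Finset.mem_univ _, ?_⟩
          funext j
          rw [Function.update_apply]
          by_cases hj : j = i
          · subst hj
            simp [h, sub_eq_add_neg]
          · simp [hj, hrest j hj]
      calc hEfin.toFinset.card ≤ (Vf.biUnion (fun u => {u} ×ˢ nbrF u)).card :=
            Finset.card_le_card hsub
        _ ≤ ∑ u ∈ Vf, ({u} ×ˢ nbrF u).card := Finset.card_biUnion_le
        _ ≤ Vf.card * (d * 2) := by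
            rw [← smul_eq_mul]
            refine Finset.sum_le_card_nsmul _ _ _ (fun u hu => ?_)
            rw [Finset.card_product, Finset.card_singleton, one_mul]
            calc (nbrF u).card ≤ (Finset.univ : Finset (Fin d × Bool)).card :=
                  Finset.card_image_le
              _ = d * 2 := by simp [Finset.card_univ]
    -- per-vertex local isoperimetry
    set bdx : Pt d → Set (Pt d × Pt d) := fun x =>
      bdWithin L0 (G ∩ boxI x (-(Ls:ℤ)) (2*Ls)) (A ∩ boxI x (-(Ls:ℤ)) (2*Ls)) with hbdx
    have hbdxW : ∀ x, bdx x ⊆ bdWithin L0 G A := by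
      rintro x ⟨e1, e2⟩ ⟨h1, h2, h3⟩
      exact ⟨h1, h2.1, h3.1.1, fun hA' => h3.2 ⟨hA', h3.1.2⟩⟩
    have hVbound : ∀ u ∈ Vf,
        γ₄ * (m:ℝ)^(d-1) ≤ ((WF.filter (fun e => e ∈ bdx (sc u))).card : ℝ) := by
      intro u hu
      obtain ⟨huF, v, hadj, hvF⟩ := Finset.mem_filter.mp hu
      have hxD : sc u ∈ D := hscD u huF
      have hxT : sc u ∈ T := Finset.filter_subset _ _ hxD
      have hxlat : sc u ∈ lattice d Ls := hTlat _ hxT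
      have hxball := hTball3 _ hxT
      have hylat : sc v ∈ lattice d Ls := fun i => ⟨v i, rfl⟩
      have hyD : sc v ∉ D := by
        intro hyD'
        apply hvF
        rw [← hpsi_sc v]
        exact Finset.mem_image_of_mem _ hyD'
      have hyadj : ∀ i, (sc v i - sc u i).natAbs ≤ Ls := by
        intro i
        have hvi : (u i - v i).natAbs ≤ 1 := natAbs_le_of_dist1_le (le_of_eq hadj) i
        have heq : sc v i - sc u i = (Ls:ℤ) * (v i - u i) := by
          simp only [hsc]
          ring
        rw [heq, Int.natAbs_mul, Int.natAbs_natCast]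
        calc Ls * (v i - u i).natAbs ≤ Ls * 1 := by
              apply Nat.mul_le_mul_left
              omega
          _ = Ls := by omega
      have hfiby : 2 * (fib (sc v)).card < m ^ d := by
        by_cases hyT : sc v ∈ T
        · have hns : ¬ (m^d ≤ 2*(fib (sc v)).card) := by
            intro hc
            exact hyD (Finset.mem_filter.mpr ⟨hyT, hc⟩)
          omega
        · have hemp : fib (sc v) = ∅ := by
            rw [Finset.eq_empty_iff_forall_notMem]
            intro p hp
            simp only [hfib] at hp
            rw [Finset.mem_filter] at hp
            exact hyT (hp.2 ▸ Finset.mem_image_of_mem _ hp.1)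
          rw [hemp]
          simp only [Finset.card_empty, Nat.mul_zero]
          exact Nat.pow_pos (by omega)
      set a' := A ∩ boxI (sc u) (-(Ls:ℤ)) (2*Ls) with ha'def
      have ha'fin : a'.Finite := hAfin.subset Set.inter_subset_left
      have ha'sub : a' ⊆ G ∩ boxI (sc u) (-(Ls:ℤ)) (2*Ls) := fun p hp => ⟨hAG hp.1, hp.2⟩
      have hlow : (1:ℝ)/2 * ((Ls:ℝ)/(L0:ℝ))^d ≤ (a'.ncard : ℝ) := by
        rw [hM]
        have hsub2 : (A ∩ box (sc u) Ls : Set (Pt d)) ⊆ a' := by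
          rintro p ⟨hp1, hp2⟩
          refine ⟨hp1, fun i => ?_⟩
          have := hp2 i
          constructor
          · push_cast
            omega
          · push_cast
            omega
        have h1 : (fib (sc u)).card ≤ a'.ncard := by
          rw [← hfibcard _ hxlat]
          exact Set.ncard_le_ncard hsub2 ha'fin
        have h2 : m ^ d ≤ 2 * (fib (sc u)).card := (Finset.mem_filter.mp hxD).2
        have h3 : (m:ℝ)^d ≤ 2 * (a'.ncard : ℝ) := by
          have : m ^ d ≤ 2 * a'.ncard := by omega
          exact_mod_cast this
        linarith
      have hup : (a'.ncard : ℝ) ≤ ((3:ℝ)^d - 1/2) * ((Ls:ℝ)/(L0:ℝ))^d := by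
        rw [hM]
        have hkey := boxI_card_le hL0 hm hLsm ha'fin
          (fun p hp => hAlat p hp.1) Set.inter_subset_right hxlat hylat hyadj
        have h1 : (a' ∩ box (sc v) Ls).ncard ≤ (fib (sc v)).card := by
          rw [← Set.ncard_coe_finset, ← hfibset _ hylat]
          refine Set.ncard_le_ncard ?_ (hAfin.subset Set.inter_subset_left)
          rintro p ⟨hp1, hp2⟩
          exact ⟨hp1.1, hp2⟩
        have h2 : a'.ncard + m^d ≤ (fib (sc v)).card + 3^d * m^d := by omega
        have h3 : 2*(fib (sc v)).card + 1 ≤ m ^ d := by omega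
        have c1 : (a'.ncard:ℝ) + (m:ℝ)^d ≤ ((fib (sc v)).card:ℝ) + (3:ℝ)^d * (m:ℝ)^d := by
          exact_mod_cast h2
        have c2 : 2*(((fib (sc v)).card):ℝ) + 1 ≤ (m:ℝ)^d := by exact_mod_cast h3
        linarith
      have hlocx := hloc (sc u) ⟨hxlat, hxball⟩ a' ha'sub hlow hup
      rw [hM] at hlocx
      have hbd_eq : (bdx (sc u) : Set (Pt d × Pt d)) =
          ↑(WF.filter (fun e => e ∈ bdx (sc u))) := by
        ext e
        constructor
        · intro h
          exact Finset.mem_coe.mpr (Finset.mem_filter.mpr ⟨(hWFmem e).mpr (hbdxW _ h), h⟩)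
        · intro h
          exact (Finset.mem_filter.mp (Finset.mem_coe.mp h)).2
      have hbd_card : (bdx (sc u)).ncard = (WF.filter (fun e => e ∈ bdx (sc u))).card := by
        conv_lhs => rw [hbd_eq]
        rw [Set.ncard_coe_finset]
      calc γ₄ * (m:ℝ)^(d-1)
          ≤ ((bdWithin L0 (G ∩ boxI (sc u) (-(Ls:ℤ)) (2*Ls)) a').ncard : ℝ) := hlocx
        _ = ((WF.filter (fun e => e ∈ bdx (sc u))).card : ℝ) := by
            rw [show bdWithin L0 (G ∩ boxI (sc u) (-(Ls:ℤ)) (2*Ls)) a' = bdx (sc u) from rfl,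
              hbd_card]
    -- double counting
    have hdouble : ∑ u ∈ Vf, (WF.filter (fun e => e ∈ bdx (sc u))).card ≤ WF.card * 3 ^ d := by
      have hswap : ∑ u ∈ Vf, (WF.filter (fun e => e ∈ bdx (sc u))).card
          = ∑ e ∈ WF, (Vf.filter (fun u => e ∈ bdx (sc u))).card := by
        simp only [Finset.card_filter]
        rw [Finset.sum_comm]
      rw [hswap]
      have hper : ∀ e ∈ WF, (Vf.filter (fun u => e ∈ bdx (sc u))).card ≤ 3 ^ d := by
        intro e he
        have hmaps : ∀ u ∈ Vf.filter (fun u => e ∈ bdx (sc u)),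
            (fun i => u i - e.1 i / (Ls:ℤ)) ∈
              Fintype.piFinset (fun _ : Fin d => ({-1,0,1} : Finset ℤ)) := by
          intro u hu
          have hmem := (Finset.mem_filter.mp hu).2
          obtain ⟨-, h1, -⟩ := hmem
          have hbox := h1.2
          rw [Fintype.mem_piFinset]
          intro i
          have hb := hbox i
          have hsceq : sc u i = (Ls:ℤ) * u i := rfl
          rw [hsceq] at hb
          have hq1 : u i - 1 ≤ e.1 i / Ls := by
            rw [Int.le_ediv_iff_mul_le hLsZ]
            push_cast at hb
            nlinarith [hb.1, hb.2]
          have hq2 : e.1 i / Ls < u i + 2 := by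
            rw [Int.ediv_lt_iff_lt_mul hLsZ]
            push_cast at hb
            nlinarith [hb.1, hb.2]
          simp only [Finset.mem_insert, Finset.mem_singleton]
          omega
        have hinj : Set.InjOn (fun (u : Pt d) (i : Fin d) => u i - e.1 i / (Ls:ℤ))
            ↑(Vf.filter (fun u => e ∈ bdx (sc u))) := by
          intro u hu u' hu' huu'
          funext i
          have := congrFun huu' i
          simp only at this
          omega
        calc (Vf.filter (fun u => e ∈ bdx (sc u))).card
            ≤ (Fintype.piFinset (fun _ : Fin d => ({-1,0,1} : Finset ℤ))).card :=
              Finset.card_le_card_of_injOn _ hmaps hinj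
          _ = 3 ^ d := by
              rw [Fintype.card_piFinset]
              simp
      calc ∑ e ∈ WF, (Vf.filter (fun u => e ∈ bdx (sc u))).card
          ≤ ∑ e ∈ WF, 3 ^ d := Finset.sum_le_sum hper
        _ = WF.card * 3 ^ d := by rw [Finset.sum_const, smul_eq_mul]
    -- cardinality of D
    have hKD : K.card ≤ 2 * (D.card * m ^ d) := by
      calc K.card ≤ 2 * ∑ z ∈ D, (fib z).card := hde
        _ ≤ 2 * (D.card * m ^ d) := by
            apply Nat.mul_le_mul_left
            rw [← smul_eq_mul]
            exact Finset.sum_le_card_nsmul _ _ _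
              (fun z hz => hfible z (Finset.filter_subset _ _ hz))
    have hFD : (A.ncard : ℝ) / (2*(m:ℝ)^d) ≤ (F.card : ℝ) := by
      rw [div_le_iff₀ (by positivity), hAK]
      have h1 : (K.card : ℝ) ≤ 2 * ((D.card:ℝ) * (m:ℝ)^d) := by exact_mod_cast hKD
      rw [hFcard]
      linarith
    have hVge : cstar * (F.card:ℝ) ^ (((d:ℝ)-1)/d) ≤ (Vf.card : ℝ) * (2*(d:ℝ)) := by
      calc cstar * (F.card:ℝ) ^ (((d:ℝ)-1)/d)
          ≤ ((edgeBd Set.univ (↑F : Set (Pt d))).ncard : ℝ) := hiso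
        _ = (hEfin.toFinset.card : ℝ) := by rw [Set.ncard_eq_toFinset_card _ hEfin]
        _ ≤ (Vf.card : ℝ) * (2*(d:ℝ)) := by
            have h1 : (hEfin.toFinset.card : ℝ) ≤ (Vf.card : ℝ) * ((d:ℝ)*2) := by
              exact_mod_cast hEbd
            linarith
    have hsumlow : (Vf.card : ℝ) * (γ₄ * (m:ℝ)^(d-1)) ≤ (3:ℝ)^d * (WF.card : ℝ) := by
      have h1 : Vf.card • (γ₄ * (m:ℝ)^(d-1)) ≤
          ∑ u ∈ Vf, ((WF.filter (fun e => e ∈ bdx (sc u))).card : ℝ) :=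
        Finset.card_nsmul_le_sum _ _ _ hVbound
      rw [nsmul_eq_mul] at h1
      have h2 : ∑ u ∈ Vf, ((WF.filter (fun e => e ∈ bdx (sc u))).card : ℝ)
          ≤ (WF.card:ℝ) * (3:ℝ)^d := by
        have h3 : ((∑ u ∈ Vf, (WF.filter (fun e => e ∈ bdx (sc u))).card : ℕ):ℝ)
            ≤ ((WF.card * 3^d : ℕ):ℝ) := by exact_mod_cast hdouble
        push_cast at h3
        exact h3
      linarith
    have hfin := endgame2 (dn := d) (M := (m:ℝ)) (a := (A.ncard:ℝ)) (cs := cstar)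
      (g4 := γ₄) (Fc := (F.card:ℝ)) (Vc := (Vf.card:ℝ)) (Wc := (WF.card:ℝ))
      hd hmR ha0 hcstar hγ₄ (Nat.cast_nonneg _) hFD hVge hsumlow
    rw [hWcard]
    calc min ((1:ℝ)/14) (cstar * γ₄ / (4*(d:ℝ)*3^d)) * (A.ncard:ℝ)^(((d:ℝ)-1)/d)
        ≤ (cstar * γ₄ / (4*(d:ℝ)*3^d)) * (A.ncard:ℝ)^(((d:ℝ)-1)/d) := by
          apply mul_le_mul_of_nonneg_right (min_le_right _ _)
            (Real.rpow_nonneg (Nat.cast_nonneg _) _)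
      _ ≤ (WF.card : ℝ) := hfin


end Perco
end
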